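/- arXiv:2507.13821 — 7 statements merged into one kernel-verified Lean document; each statement's English description precedes it below -/
import Mathlib

section
/- Let G be a connected d-regular graph (d ≥ 3) with n vertices, m edges, and adjacency eigenvalues λ₁,...,λₙ. Then the characteristic polynomial of the underlying undirected graph L*(G) of the oriented line graph of G equals (x²−4)^{m−n} · ∏_{i=1}^{n} ((x−λᵢ)² − (d−2)²). -/
set_option maxHeartbeats 1600000
set_option synthInstance.maxHeartbeats 1000000

open Polynomial Matrix
open scoped Classical

/-- Vertex type of the oriented line graph: ordered pairs of adjacent vertices. -/
abbrev OLV {V : Type*} (G : SimpleGraph V) := {p : V × V // G.Adj p.1 p.2}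

/-- Arc relation of the oriented line graph: from (u,v) to (v,w) when u ≠ w. -/
def olArc {V : Type*} (G : SimpleGraph V) (a b : OLV G) : Prop :=
  a.1.2 = b.1.1 ∧ a.1.1 ≠ b.1.2

/-- Underlying undirected graph L*(G) of the oriented line graph. -/
def Lstar {V : Type*} (G : SimpleGraph V) : SimpleGraph (OLV G) :=
  SimpleGraph.fromRel (olArc G)

namespace OLAux

variable {V : Type*} [Fintype V] [DecidableEq V] (G : SimpleGraph V)

/-- Arc reversal. -/
def rev (e : OLV G) : OLV G := ⟨(e.1.2, e.1.1), e.2.symm⟩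

@[simp] lemma rev_rev (e : OLV G) : rev G (rev G e) = e := rfl

lemma rev_eq_iff (e f : OLV G) : f = rev G e ↔ (f.1.1 = e.1.2 ∧ f.1.2 = e.1.1) := by
  constructor
  · rintro rfl; exact ⟨rfl, rfl⟩
  · rintro ⟨h1, h2⟩
    apply Subtype.ext
    exact Prod.ext h1 h2

variable (R : Type*) [CommRing R]

/-- Tail incidence matrix. -/
noncomputable def Sm : Matrix (OLV G) V R := fun e v => if e.1.1 = v then 1 else 0

/-- Head incidence matrix. -/
noncomputable def Tm : Matrix (OLV G) V R := fun e v => if e.1.2 = v then 1 else 0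

/-- Arc reversal permutation matrix. -/
noncomputable def Jm : Matrix (OLV G) (OLV G) R := fun e f => if f = rev G e then 1 else 0

lemma Jm_transpose : (Jm G R)ᵀ = Jm G R := by
  ext e f
  simp only [transpose_apply, Jm]
  congr 1
  simp only [eq_iff_iff]
  constructor
  · rintro rfl; simp
  · rintro rfl; simp

lemma Jm_mul_Jm : Jm G R * Jm G R = 1 := by
  ext e f
  simp only [Matrix.mul_apply, Jm, ite_mul, one_mul, zero_mul]
  rw [Finset.sum_ite_eq' Finset.univ (rev G e) (fun g => if f = rev G g then (1:R) else 0)]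
  simp [Matrix.one_apply, eq_comm]

lemma Jm_mul_Sm : Jm G R * Sm G R = Tm G R := by
  ext e v
  simp only [Matrix.mul_apply, Jm, Sm, Tm, ite_mul, one_mul, zero_mul]
  rw [Finset.sum_ite_eq' Finset.univ (rev G e) (fun g => if g.1.1 = v then (1:R) else 0)]
  simp [rev]
  by_cases h : e.1.2 = v <;> simp [h, rev]

lemma Jm_mul_Tm : Jm G R * Tm G R = Sm G R := by
  ext e v
  simp only [Matrix.mul_apply, Jm, Sm, Tm, ite_mul, one_mul, zero_mul]
  rw [Finset.sum_ite_eq' Finset.univ (rev G e) (fun g => if g.1.2 = v then (1:R) else 0)]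
  simp [rev]
  by_cases h : e.1.1 = v <;> simp [h, rev]

lemma Tm_eq : Tm G R = Jm G R * Sm G R := (Jm_mul_Sm G R).symm

lemma card_out (u : V) :
    (Finset.univ.filter (fun e : OLV G => e.1.1 = u)).card = G.degree u := by
  rw [← SimpleGraph.card_neighborFinset_eq_degree]
  apply Finset.card_bij (fun e _ => e.1.2)
  · intro e he
    simp only [Finset.mem_filter] at he
    rw [SimpleGraph.mem_neighborFinset]
    exact he.2 ▸ e.2
  · intro e₁ h₁ e₂ h₂ h
    simp only [Finset.mem_filter] at h₁ h₂
    apply Subtype.ext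
    exact Prod.ext (h₁.2.trans h₂.2.symm) h
  · intro w hw
    rw [SimpleGraph.mem_neighborFinset] at hw
    exact ⟨⟨(u, w), hw⟩, by simp, rfl⟩

lemma St_mul_Sm (d : ℕ) (hreg : G.IsRegularOfDegree d) :
    (Sm G R)ᵀ * Sm G R = (d : R) • 1 := by
  ext u v
  simp only [Matrix.mul_apply, transpose_apply, Sm, ite_mul, one_mul, zero_mul,
    Matrix.smul_apply, Matrix.one_apply, smul_eq_mul]
  by_cases huv : u = v
  · subst huv
    have hcollapse : ∀ e : OLV G,
        (if e.1.1 = u then (if e.1.1 = u then (1:R) else 0) else 0)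
          = if e.1.1 = u then 1 else 0 := fun e => by split_ifs <;> rfl
    rw [Finset.sum_congr rfl fun e _ => hcollapse e, Finset.sum_boole, card_out G u, hreg u]
    simp
  · rw [if_neg huv, mul_zero]
    apply Finset.sum_eq_zero
    intro e _
    split_ifs with h1 h2
    · exact absurd (h1.symm.trans h2) huv
    · rfl
    · rfl

lemma St_mul_Tm : (Sm G R)ᵀ * Tm G R = G.adjMatrix R := by
  ext u v
  simp only [Matrix.mul_apply, transpose_apply, Sm, Tm, SimpleGraph.adjMatrix_apply]
  by_cases h : G.Adj u v
  · rw [if_pos h]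
    have : ∀ e : OLV G, (if e.1.1 = u then (1:R) else 0) * (if e.1.2 = v then 1 else 0)
        = if e = (⟨(u, v), h⟩ : OLV G) then 1 else 0 := by
      intro e
      by_cases h1 : e.1.1 = u <;> by_cases h2 : e.1.2 = v <;>
        simp [h1, h2, Subtype.ext_iff, Prod.ext_iff]
    rw [Finset.sum_congr rfl (fun e _ => this e)]
    rw [Finset.sum_ite_eq' Finset.univ (⟨(u, v), h⟩ : OLV G) (fun _ => (1:R))]
    simp
  · rw [if_neg h]
    apply Finset.sum_eq_zero
    intro e _
    split_ifs with h1 h2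
    · exact absurd (h1 ▸ h2 ▸ e.2) h
    · exact mul_zero _
    · exact zero_mul _
    · exact zero_mul _

lemma Tt_eq : (Tm G R)ᵀ = (Sm G R)ᵀ * Jm G R := by
  rw [Tm_eq, transpose_mul, Jm_transpose]

lemma Tt_mul_Tm (d : ℕ) (hreg : G.IsRegularOfDegree d) :
    (Tm G R)ᵀ * Tm G R = (d : R) • 1 := by
  rw [Tt_eq, Matrix.mul_assoc, Jm_mul_Tm, St_mul_Sm G R d hreg]

lemma Tt_mul_Sm : (Tm G R)ᵀ * Sm G R = G.adjMatrix R := by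
  rw [Tt_eq, Matrix.mul_assoc, Jm_mul_Sm, St_mul_Tm]

lemma Tm_mul_St_apply (e f : OLV G) :
    (Tm G R * (Sm G R)ᵀ) e f = if e.1.2 = f.1.1 then 1 else 0 := by
  simp only [Matrix.mul_apply, transpose_apply, Tm, Sm, ite_mul, one_mul, zero_mul]
  rw [Finset.sum_ite_eq Finset.univ (e.1.2) (fun v => if f.1.1 = v then (1:R) else 0)]
  simp [eq_comm]

lemma Sm_mul_Tt_apply (e f : OLV G) :
    (Sm G R * (Tm G R)ᵀ) e f = if e.1.1 = f.1.2 then 1 else 0 := by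
  simp only [Matrix.mul_apply, transpose_apply, Sm, Tm, ite_mul, one_mul, zero_mul]
  rw [Finset.sum_ite_eq Finset.univ (e.1.1) (fun v => if f.1.2 = v then (1:R) else 0)]
  simp [eq_comm]

/-- The key decomposition of the adjacency matrix of `L*(G)`. -/
lemma adj_decomp :
    (Lstar G).adjMatrix R
      = Tm G R * (Sm G R)ᵀ + Sm G R * (Tm G R)ᵀ - (2 : R) • Jm G R := by
  ext e f
  simp only [Matrix.sub_apply, Matrix.add_apply, Tm_mul_St_apply, Sm_mul_Tt_apply,
    Matrix.smul_apply, Jm, smul_eq_mul, SimpleGraph.adjMatrix_apply]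
  have hne : e.1.1 ≠ e.1.2 := e.2.ne
  have hrev : (f = rev G e) ↔ (f.1.1 = e.1.2 ∧ f.1.2 = e.1.1) := rev_eq_iff G e f
  have hadj : (Lstar G).Adj e f ↔ e ≠ f ∧ (olArc G e f ∨ olArc G f e) :=
    SimpleGraph.fromRel_adj _ _ _
  by_cases h1 : e.1.2 = f.1.1 <;> by_cases h2 : e.1.1 = f.1.2
  · -- both: f = rev e, not adjacent
    have hf : f = rev G e := hrev.mpr ⟨h1.symm, h2.symm⟩
    have : ¬ (Lstar G).Adj e f := by
      rw [hadj]
      rintro ⟨-, h | h⟩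
      · exact h.2 h2
      · exact h.2 h1.symm
    rw [if_neg this, if_pos h1, if_pos h2, if_pos hf]
    ring
  · -- h1 only : olArc e f
    have hf : ¬ (f = rev G e) := fun hc => h2 ((hrev.mp hc).2.symm)
    have hef : e ≠ f := fun hc => hne (by subst hc; exact h1.symm)
    have : (Lstar G).Adj e f := hadj.mpr ⟨hef, Or.inl ⟨h1, h2⟩⟩
    rw [if_pos this, if_pos h1, if_neg h2, if_neg hf]
    ring
  · -- h2 only : olArc f e
    have hf : ¬ (f = rev G e) := fun hc => h1 ((hrev.mp hc).1.symm)
    have hef : e ≠ f := fun hc => hne (by subst hc; exact h2)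
    have : (Lstar G).Adj e f := hadj.mpr ⟨hef, Or.inr ⟨h2.symm, fun hc => h1 hc.symm⟩⟩
    rw [if_pos this, if_neg h1, if_pos h2, if_neg hf]
    ring
  · -- neither
    have hf : ¬ (f = rev G e) := fun hc => h1 ((hrev.mp hc).1.symm)
    have : ¬ (Lstar G).Adj e f := by
      rw [hadj]
      rintro ⟨-, h | h⟩
      · exact h1 h.1
      · exact h2 h.1.symm
    rw [if_neg this, if_neg h1, if_neg h2, if_neg hf]
    ring

section DetJ

lemma mul_sub_mul_Jm (a b : R) :
    ((a • (1 : Matrix (OLV G) (OLV G) R) + b • Jm G R) * (a • 1 - b • Jm G R))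
      = (a ^ 2 - b ^ 2) • 1 := by
  rw [Matrix.add_mul, Matrix.mul_sub, Matrix.mul_sub]
  simp only [Matrix.smul_mul, Matrix.mul_smul, Matrix.one_mul, Matrix.mul_one, Jm_mul_Jm,
    smul_smul]
  module

/-- Sign function on arcs. -/
noncomputable def eps : OLV G → R := fun e =>
  if (Fintype.equivFin V) e.1.1 < (Fintype.equivFin V) e.1.2 then 1 else -1

noncomputable def Dm : Matrix (OLV G) (OLV G) R := diagonal (eps G R)

lemma eps_mul_self (e : OLV G) : eps G R e * eps G R e = 1 := by
  unfold eps; split_ifs <;> ring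

lemma eps_mul_rev (e : OLV G) : eps G R e * eps G R (rev G e) = -1 := by
  have hab : (Fintype.equivFin V) e.1.1 ≠ (Fintype.equivFin V) e.1.2 :=
    fun h => e.2.ne ((Fintype.equivFin V).injective h)
  unfold eps rev
  rcases hab.lt_or_gt with h | h
  · rw [if_pos h]; simp only []
    rw [if_neg (asymm h)]; ring
  · rw [if_neg (asymm h)]; simp only []
    rw [if_pos h]; ring

lemma Dm_mul_Dm : Dm G R * Dm G R = 1 := by
  rw [Dm, diagonal_mul_diagonal]
  rw [show (fun i => eps G R i * eps G R i) = fun _ => (1 : R) from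
    funext fun e => eps_mul_self G R e]
  exact Matrix.diagonal_one

lemma Dm_Jm_Dm : Dm G R * Jm G R * Dm G R = -(Jm G R) := by
  ext e f
  simp only [Dm]
  rw [Matrix.mul_diagonal, Matrix.diagonal_mul]
  simp only [Jm, Matrix.neg_apply]
  by_cases hf : f = rev G e
  · subst hf
    simpa using eps_mul_rev G R e
  · simp [hf]

end DetJ

lemma card_OLV : Fintype.card (OLV G) = 2 * G.edgeFinset.card := by
  rw [← SimpleGraph.dart_card_eq_twice_card_edges]
  exact Fintype.card_congr
    ⟨fun e => ⟨e.1, e.2⟩, fun d => ⟨d.toProd, d.adj⟩, fun e => rfl, fun d => rfl⟩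

lemma det_X_one_add_two_Jm :
    ((X : ℝ[X]) • (1 : Matrix (OLV G) (OLV G) ℝ[X]) + (2 : ℝ[X]) • Jm G ℝ[X]).det
      = (X ^ 2 - 4) ^ G.edgeFinset.card := by
  set m := G.edgeFinset.card with hm
  set p := ((X : ℝ[X]) • (1 : Matrix (OLV G) (OLV G) ℝ[X]) + (2 : ℝ[X]) • Jm G ℝ[X]).det with hp
  -- p is monic, being a characteristic polynomial
  have hch : (X : ℝ[X]) • (1 : Matrix (OLV G) (OLV G) ℝ[X]) + (2 : ℝ[X]) • Jm G ℝ[X]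
      = charmatrix (-((2:ℝ) • Jm G ℝ)) := by
    ext e f
    rw [charmatrix_apply]
    simp only [Matrix.add_apply, Matrix.smul_apply, Matrix.one_apply, Matrix.neg_apply,
      Matrix.diagonal_apply, Jm, smul_eq_mul, map_neg, apply_ite C, map_ofNat, map_zero,
      mul_ite, mul_one, mul_zero]
    by_cases h1 : e = f <;> by_cases h2 : f = rev G e
    · exfalso
      subst h1
      exact e.2.ne ((rev_eq_iff G e e).mp h2).1
    · simp [h1, h2]
    · simp [h1, h2]
    · simp [h1, h2]
  have hmonic : p.Monic := by
    rw [hp, hch]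
    exact Matrix.charpoly_monic _
  -- p = det (X•1 - 2•J) by sign conjugation
  have hq : p = ((X : ℝ[X]) • (1 : Matrix (OLV G) (OLV G) ℝ[X]) - (2 : ℝ[X]) • Jm G ℝ[X]).det := by
    have hD : Dm G ℝ[X] * ((X : ℝ[X]) • 1 + (2 : ℝ[X]) • Jm G ℝ[X]) * Dm G ℝ[X]
        = (X : ℝ[X]) • 1 - (2 : ℝ[X]) • Jm G ℝ[X] := by
      rw [Matrix.mul_add, Matrix.add_mul]
      simp only [Matrix.mul_smul, Matrix.smul_mul, Matrix.mul_one]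
      rw [Dm_mul_Dm, Matrix.mul_assoc, ← Matrix.mul_assoc (Dm G ℝ[X]) (Jm G ℝ[X]) (Dm G ℝ[X]),
        Dm_Jm_Dm, smul_neg, ← sub_eq_add_neg]
    rw [← hD, Matrix.det_mul, Matrix.det_mul]
    rw [show (Dm G ℝ[X]).det * _ * (Dm G ℝ[X]).det
        = ((Dm G ℝ[X]).det * (Dm G ℝ[X]).det) * p from by rw [hp]; ring,
      ← Matrix.det_mul, Dm_mul_Dm, Matrix.det_one, one_mul]
  -- p * p = ((X^2-4)^m)^2
  have hpp : p * p = ((X ^ 2 - 4 : ℝ[X]) ^ m) * ((X ^ 2 - 4 : ℝ[X]) ^ m) := by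
    nth_rewrite 2 [hq]
    rw [hp, ← Matrix.det_mul, mul_sub_mul_Jm, Matrix.det_smul, Matrix.det_one, mul_one,
      card_OLV, ← hm]
    rw [show ((2:ℝ[X])^2 : ℝ[X]) = 4 by norm_num]
    ring
  have hQmonic : ((X ^ 2 - 4 : ℝ[X]) ^ m).Monic := by
    apply Polynomial.Monic.pow
    have h4 : (C (4:ℝ)) = (4:ℝ[X]) := map_ofNat C 4
    rw [← h4]
    exact Polynomial.monic_X_pow_sub_C (4:ℝ) (by norm_num)
  rcases mul_self_eq_mul_self_iff.mp hpp with h | h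
  · exact h
  · exfalso
    have h1 : p.leadingCoeff = 1 := hmonic
    rw [h, Polynomial.leadingCoeff_neg, hQmonic.leadingCoeff] at h1
    norm_num at h1

lemma det_fromBlocks_pair {W : Type*} [Fintype W] [DecidableEq W] (A B : Matrix W W R) :
    (Matrix.fromBlocks A B B A).det = (A + B).det * (A - B).det := by
  have h : Matrix.fromBlocks (1 : Matrix W W R) 1 0 1 * Matrix.fromBlocks A B B A *
        Matrix.fromBlocks (1 : Matrix W W R) (-1) 0 1
      = Matrix.fromBlocks (A + B) 0 B (A - B) := by
    rw [Matrix.fromBlocks_multiply, Matrix.fromBlocks_multiply]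
    ext (i | i) (j | j) <;>
      simp [Matrix.fromBlocks_apply₁₁, Matrix.fromBlocks_apply₁₂, Matrix.fromBlocks_apply₂₁,
        Matrix.fromBlocks_apply₂₂, Matrix.sub_apply, Matrix.add_apply, Matrix.neg_apply,
        Matrix.mul_neg, sub_eq_add_neg] <;> abel
  have hdet := congrArg Matrix.det h
  rw [Matrix.det_mul, Matrix.det_mul, Matrix.det_fromBlocks_zero₂₁,
    Matrix.det_fromBlocks_zero₂₁, Matrix.det_fromBlocks_zero₁₂, Matrix.det_one] at hdet
  rw [← hdet]
  ring

variable {R' : Type*} [CommRing R']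

lemma map_Jm (f : R →+* R') : (Jm G R).map f = Jm G R' := by
  ext e g
  simp [Jm, Matrix.map_apply, apply_ite f]

lemma map_Sm (f : R →+* R') : (Sm G R).map f = Sm G R' := by
  ext e v
  simp [Sm, Matrix.map_apply, apply_ite f]

lemma map_adjM {W : Type*} [Fintype W] (H : SimpleGraph W) (f : R →+* R') :
    (H.adjMatrix R).map f = H.adjMatrix R' := by
  ext u v
  simp [Matrix.map_apply, apply_ite f]

lemma charmatrix_adjM {W : Type*} [Fintype W] [DecidableEq W] (H : SimpleGraph W) :
    charmatrix (H.adjMatrix ℝ) = (X : ℝ[X]) • 1 - H.adjMatrix ℝ[X] := by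
  ext u v
  rw [charmatrix_apply]
  by_cases h : u = v <;>
    simp [h, Matrix.diagonal_apply, Matrix.smul_apply, Matrix.one_apply, Matrix.sub_apply,
      apply_ite (C : ℝ →+* ℝ[X]), smul_eq_mul]

lemma charpoly_adjM {W : Type*} [Fintype W] [DecidableEq W] (H : SimpleGraph W) :
    (H.adjMatrix ℝ).charpoly = ((X : ℝ[X]) • 1 - H.adjMatrix ℝ[X]).det := by
  rw [Matrix.charpoly, charmatrix_adjM]

noncomputable def xK : RatFunc ℝ := algebraMap ℝ[X] (RatFunc ℝ) X

lemma xK_sq_sub_four_ne : (xK ^ 2 - 4 : RatFunc ℝ) ≠ 0 := by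
  have h : (xK ^ 2 - 4 : RatFunc ℝ) = algebraMap ℝ[X] (RatFunc ℝ) (X ^ 2 - 4) := by
    rw [map_sub, map_pow, map_ofNat, xK]
  rw [h]
  intro hc
  have h0 : ((X : ℝ[X]) ^ 2 - 4) = 0 := IsFractionRing.injective ℝ[X] (RatFunc ℝ)
    (by rw [hc, map_zero])
  have := congrArg (Polynomial.eval 0) h0
  simp at this

section Field

variable {F : Type*} [Field F]

lemma P_mul_Q (x : F) (hx2 : x ^ 2 - 4 ≠ 0) :
    (x • (1 : Matrix (OLV G) (OLV G) F) + (2 : F) • Jm G F)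
        * ((x ^ 2 - 4)⁻¹ • (x • 1 - (2 : F) • Jm G F)) = 1 := by
  rw [Matrix.mul_smul, mul_sub_mul_Jm, smul_smul,
    show ((2 : F) ^ 2) = 4 by norm_num, inv_mul_cancel₀ hx2, one_smul]

lemma JW_eq : Jm G F * fromCols (Tm G F) (Sm G F) = fromCols (Sm G F) (Tm G F) := by
  rw [mul_fromCols, Jm_mul_Tm, Jm_mul_Sm]

lemma YW_eq (d : ℕ) (hreg : G.IsRegularOfDegree d) :
    fromRows (Sm G F)ᵀ (Tm G F)ᵀ * fromCols (Tm G F) (Sm G F)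
      = fromBlocks (G.adjMatrix F) ((d : F) • 1) ((d : F) • 1) (G.adjMatrix F) := by
  rw [fromRows_mul_fromCols, St_mul_Tm, St_mul_Sm G F d hreg, Tt_mul_Tm G F d hreg, Tt_mul_Sm]

lemma YJW_eq (d : ℕ) (hreg : G.IsRegularOfDegree d) :
    fromRows (Sm G F)ᵀ (Tm G F)ᵀ * fromCols (Sm G F) (Tm G F)
      = fromBlocks ((d : F) • 1) (G.adjMatrix F) (G.adjMatrix F) ((d : F) • 1) := by
  rw [fromRows_mul_fromCols, St_mul_Tm, St_mul_Sm G F d hreg, Tt_mul_Tm G F d hreg, Tt_mul_Sm]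

lemma N_eq (x : F) (d : ℕ) (hreg : G.IsRegularOfDegree d) :
    fromRows (Sm G F)ᵀ (Tm G F)ᵀ
        * (((x ^ 2 - 4)⁻¹ • (x • 1 - (2 : F) • Jm G F)) * fromCols (Tm G F) (Sm G F))
      = fromBlocks
          ((x ^ 2 - 4)⁻¹ • (x • G.adjMatrix F - (2 : F) • ((d : F) • 1)))
          ((x ^ 2 - 4)⁻¹ • (x • ((d : F) • 1) - (2 : F) • G.adjMatrix F))
          ((x ^ 2 - 4)⁻¹ • (x • ((d : F) • 1) - (2 : F) • G.adjMatrix F))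
          ((x ^ 2 - 4)⁻¹ • (x • G.adjMatrix F - (2 : F) • ((d : F) • 1))) := by
  rw [Matrix.smul_mul, Matrix.sub_mul, Matrix.smul_mul, Matrix.one_mul, Matrix.smul_mul,
    JW_eq, Matrix.mul_smul, Matrix.mul_sub, Matrix.mul_smul, Matrix.mul_smul,
    YW_eq G d hreg, YJW_eq G d hreg]
  rw [Matrix.fromBlocks_smul, Matrix.fromBlocks_smul,
    show ∀ (a b c' e f g h i : Matrix V V F), fromBlocks a b c' e - fromBlocks f g h i
      = fromBlocks (a - f) (b - g) (c' - h) (e - i) from fun a b c' e f g h i => by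
        ext (u|u) (v|v) <;> simp,
    Matrix.fromBlocks_smul]

lemma one_sub_fromBlocks (B1 B2 : Matrix V V F) :
    (1 : Matrix (V ⊕ V) (V ⊕ V) F) - fromBlocks B1 B2 B2 B1
      = fromBlocks (1 - B1) (-B2) (-B2) (1 - B1) := by
  rw [← Matrix.fromBlocks_one]
  ext (u|u) (v|v) <;> simp [Matrix.one_apply]

lemma keyF (x : F) (hx2 : x ^ 2 - 4 ≠ 0) (d : ℕ) (hreg : G.IsRegularOfDegree d)
    (hdetP : (x • (1 : Matrix (OLV G) (OLV G) F) + (2 : F) • Jm G F).det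
      = (x ^ 2 - 4) ^ G.edgeFinset.card) :
    ((x • 1 - (Lstar G).adjMatrix F).det)
        * ((x ^ 2 - 4) ^ Fintype.card V * (x ^ 2 - 4) ^ Fintype.card V)
      = (x ^ 2 - 4) ^ G.edgeFinset.card
        * ((x - 2) ^ Fintype.card V
            * (((x - ((d : F) - 2)) • 1 - G.adjMatrix F).det))
        * ((x + 2) ^ Fintype.card V
            * (((x + ((d : F) - 2)) • 1 - G.adjMatrix F).det)) := by
  have hsplit : x • (1 : Matrix (OLV G) (OLV G) F) - (Lstar G).adjMatrix F
      = (x • 1 + (2 : F) • Jm G F)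
        - (fromCols (Tm G F) (Sm G F) * fromRows (Sm G F)ᵀ (Tm G F)ᵀ) := by
    rw [adj_decomp, fromCols_mul_fromRows]
    abel
  have hfact : (x • (1 : Matrix (OLV G) (OLV G) F) + (2 : F) • Jm G F)
        - (fromCols (Tm G F) (Sm G F) * fromRows (Sm G F)ᵀ (Tm G F)ᵀ)
      = (x • 1 + (2 : F) • Jm G F)
        * (1 - ((x ^ 2 - 4)⁻¹ • (x • 1 - (2 : F) • Jm G F))
            * (fromCols (Tm G F) (Sm G F) * fromRows (Sm G F)ᵀ (Tm G F)ᵀ)) := by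
    rw [Matrix.mul_sub, Matrix.mul_one, ← Matrix.mul_assoc, P_mul_Q G x hx2, Matrix.one_mul]
  have hN := N_eq G (F := F) x d hreg
  set B1 := (x ^ 2 - 4)⁻¹ • (x • G.adjMatrix F - (2 : F) • ((d : F) • 1)) with hB1
  set B2 := (x ^ 2 - 4)⁻¹ • (x • ((d : F) • 1) - (2 : F) • G.adjMatrix F) with hB2
  have hdet1 : (x • (1 : Matrix (OLV G) (OLV G) F) - (Lstar G).adjMatrix F).det
      = (x • (1 : Matrix (OLV G) (OLV G) F) + (2 : F) • Jm G F).det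
        * ((1 : Matrix (V ⊕ V) (V ⊕ V) F) - fromBlocks B1 B2 B2 B1).det := by
    rw [hsplit, hfact, Matrix.det_mul]
    congr 1
    rw [show ((x ^ 2 - 4)⁻¹ • (x • 1 - (2 : F) • Jm G F))
          * (fromCols (Tm G F) (Sm G F) * fromRows (Sm G F)ᵀ (Tm G F)ᵀ)
        = (((x ^ 2 - 4)⁻¹ • (x • 1 - (2 : F) • Jm G F)) * fromCols (Tm G F) (Sm G F))
          * fromRows (Sm G F)ᵀ (Tm G F)ᵀ from (Matrix.mul_assoc _ _ _).symm,
      Matrix.det_one_sub_mul_comm, hN]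
  have hpairEq : ((1 : Matrix (V ⊕ V) (V ⊕ V) F) - fromBlocks B1 B2 B2 B1).det
      = ((1 - B1) + (-B2)).det * ((1 - B1) - (-B2)).det := by
    rw [one_sub_fromBlocks, det_fromBlocks_pair]
  have e1 : (x ^ 2 - 4) • B1 = x • G.adjMatrix F - (2 : F) • ((d : F) • 1) := by
    rw [hB1, smul_smul, mul_inv_cancel₀ hx2, one_smul]
  have e2 : (x ^ 2 - 4) • B2 = x • ((d : F) • 1) - (2 : F) • G.adjMatrix F := by
    rw [hB2, smul_smul, mul_inv_cancel₀ hx2, one_smul]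
  have hsm1 : (x ^ 2 - 4) • ((1 - B1) + (-B2))
      = (x - 2) • ((x - ((d : F) - 2)) • 1 - G.adjMatrix F) := by
    calc (x ^ 2 - 4) • ((1 - B1) + (-B2))
        = (x ^ 2 - 4) • (1 : Matrix V V F) - (x ^ 2 - 4) • B1 - (x ^ 2 - 4) • B2 := by module
      _ = (x ^ 2 - 4) • (1 : Matrix V V F) - (x • G.adjMatrix F - (2 : F) • ((d : F) • 1))
            - (x • ((d : F) • 1) - (2 : F) • G.adjMatrix F) := by rw [e1, e2]
      _ = (x - 2) • ((x - ((d : F) - 2)) • 1 - G.adjMatrix F) := by module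
  have hsm2 : (x ^ 2 - 4) • ((1 - B1) - (-B2))
      = (x + 2) • ((x + ((d : F) - 2)) • 1 - G.adjMatrix F) := by
    calc (x ^ 2 - 4) • ((1 - B1) - (-B2))
        = (x ^ 2 - 4) • (1 : Matrix V V F) - (x ^ 2 - 4) • B1 + (x ^ 2 - 4) • B2 := by module
      _ = (x ^ 2 - 4) • (1 : Matrix V V F) - (x • G.adjMatrix F - (2 : F) • ((d : F) • 1))
            + (x • ((d : F) • 1) - (2 : F) • G.adjMatrix F) := by rw [e1, e2]
      _ = (x + 2) • ((x + ((d : F) - 2)) • 1 - G.adjMatrix F) := by module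
  have hd1 : (x ^ 2 - 4) ^ Fintype.card V * ((1 - B1) + (-B2)).det
      = (x - 2) ^ Fintype.card V * ((x - ((d : F) - 2)) • 1 - G.adjMatrix F).det := by
    have h := congrArg Matrix.det hsm1
    rwa [Matrix.det_smul, Matrix.det_smul] at h
  have hd2 : (x ^ 2 - 4) ^ Fintype.card V * ((1 - B1) - (-B2)).det
      = (x + 2) ^ Fintype.card V * ((x + ((d : F) - 2)) • 1 - G.adjMatrix F).det := by
    have h := congrArg Matrix.det hsm2
    rwa [Matrix.det_smul, Matrix.det_smul] at h
  rw [hdet1, hdetP, hpairEq, ← hd1, ← hd2]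
  ring

end Field

lemma algebraMap_C_ratfunc (a : ℝ) :
    algebraMap ℝ[X] (RatFunc ℝ) (C a) = algebraMap ℝ (RatFunc ℝ) a := by
  rw [← Polynomial.algebraMap_eq, ← IsScalarTower.algebraMap_apply]

lemma detP_ratfunc :
    ((xK • (1 : Matrix (OLV G) (OLV G) (RatFunc ℝ)) + (2 : RatFunc ℝ) • Jm G (RatFunc ℝ)).det)
      = (xK ^ 2 - 4) ^ G.edgeFinset.card := by
  have h0 := congrArg (algebraMap ℝ[X] (RatFunc ℝ)) (det_X_one_add_two_Jm G)
  rw [RingHom.map_det] at h0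
  have hmap : ((X : ℝ[X]) • (1 : Matrix (OLV G) (OLV G) ℝ[X]) + (2 : ℝ[X]) • Jm G ℝ[X]).map
      (algebraMap ℝ[X] (RatFunc ℝ))
      = xK • (1 : Matrix (OLV G) (OLV G) (RatFunc ℝ)) + (2 : RatFunc ℝ) • Jm G (RatFunc ℝ) := by
    ext e f
    simp [Matrix.map_apply, Matrix.add_apply, Matrix.smul_apply, Matrix.one_apply, Jm,
      smul_eq_mul, apply_ite (algebraMap ℝ[X] (RatFunc ℝ)), xK, map_ofNat]
  rw [RingHom.mapMatrix_apply, hmap] at h0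
  rw [h0, map_pow, map_sub, map_pow, map_ofNat, xK]

lemma map_det_smul_one_sub_adj {W : Type*} [Fintype W] [DecidableEq W] (H : SimpleGraph W)
    (p : ℝ[X]) :
    algebraMap ℝ[X] (RatFunc ℝ) ((p • (1 : Matrix W W ℝ[X]) - H.adjMatrix ℝ[X]).det)
      = ((algebraMap ℝ[X] (RatFunc ℝ) p) • (1 : Matrix W W (RatFunc ℝ))
          - H.adjMatrix (RatFunc ℝ)).det := by
  rw [RingHom.map_det, RingHom.mapMatrix_apply]
  congr 1
  ext u v
  simp only [Matrix.map_apply, Matrix.sub_apply, Matrix.smul_apply, Matrix.one_apply,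
    SimpleGraph.adjMatrix_apply, smul_eq_mul, map_sub, _root_.map_mul, mul_ite, mul_one,
    mul_zero, apply_ite (algebraMap ℝ[X] (RatFunc ℝ)), _root_.map_one, map_zero]

lemma key_poly (d : ℕ) (hreg : G.IsRegularOfDegree d) :
    ((Lstar G).adjMatrix ℝ).charpoly
        * (((X : ℝ[X]) ^ 2 - 4) ^ Fintype.card V * ((X : ℝ[X]) ^ 2 - 4) ^ Fintype.card V)
      = ((X : ℝ[X]) ^ 2 - 4) ^ G.edgeFinset.card
        * (((X : ℝ[X]) - 2) ^ Fintype.card V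
            * (((X - C ((d : ℝ) - 2)) • (1 : Matrix V V ℝ[X]) - G.adjMatrix ℝ[X]).det))
        * (((X : ℝ[X]) + 2) ^ Fintype.card V
            * (((X + C ((d : ℝ) - 2)) • (1 : Matrix V V ℝ[X]) - G.adjMatrix ℝ[X]).det)) := by
  apply IsFractionRing.injective ℝ[X] (RatFunc ℝ)
  have hK := keyF G xK xK_sq_sub_four_ne d hreg (detP_ratfunc G)
  have hchar : algebraMap ℝ[X] (RatFunc ℝ) ((Lstar G).adjMatrix ℝ).charpoly
      = ((xK • (1 : Matrix (OLV G) (OLV G) (RatFunc ℝ)) - (Lstar G).adjMatrix (RatFunc ℝ)).det) := by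
    rw [charpoly_adjM, map_det_smul_one_sub_adj]
    rfl
  have hc1 : algebraMap ℝ[X] (RatFunc ℝ)
        (((X - C ((d : ℝ) - 2)) • (1 : Matrix V V ℝ[X]) - G.adjMatrix ℝ[X]).det)
      = (((xK - ((d : RatFunc ℝ) - 2)) • (1 : Matrix V V (RatFunc ℝ))
          - G.adjMatrix (RatFunc ℝ)).det) := by
    rw [map_det_smul_one_sub_adj, map_sub, algebraMap_C_ratfunc, map_sub, map_natCast, map_ofNat]
    rfl
  have hc2 : algebraMap ℝ[X] (RatFunc ℝ)
        (((X + C ((d : ℝ) - 2)) • (1 : Matrix V V ℝ[X]) - G.adjMatrix ℝ[X]).det)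
      = (((xK + ((d : RatFunc ℝ) - 2)) • (1 : Matrix V V (RatFunc ℝ))
          - G.adjMatrix (RatFunc ℝ)).det) := by
    rw [map_det_smul_one_sub_adj, map_add, algebraMap_C_ratfunc, map_sub, map_natCast, map_ofNat]
    rfl
  have hxmap : algebraMap ℝ[X] (RatFunc ℝ) X = xK := rfl
  have hA : algebraMap ℝ[X] (RatFunc ℝ) ((X : ℝ[X]) ^ 2 - 4) = xK ^ 2 - 4 := by
    rw [map_sub, map_pow, hxmap, map_ofNat]
  have hB : algebraMap ℝ[X] (RatFunc ℝ) ((X : ℝ[X]) - 2) = xK - 2 := by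
    rw [map_sub, hxmap, map_ofNat]
  have hC : algebraMap ℝ[X] (RatFunc ℝ) ((X : ℝ[X]) + 2) = xK + 2 := by
    rw [map_add, hxmap, map_ofNat]
  simp only [_root_.map_mul, map_pow]
  rw [hA, hB, hC, hchar, hc1, hc2]
  exact hK

end OLAux

theorem stmt_0 {V : Type*} [Fintype V] [DecidableEq V] (G : SimpleGraph V)
    (d n m : ℕ) (hd : 3 ≤ d) (hreg : G.IsRegularOfDegree d) (hconn : G.Connected)
    (hn : Fintype.card V = n) (hm : G.edgeFinset.card = m)
    (lam : Fin n → ℝ)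
    (hchar : (G.adjMatrix ℝ).charpoly = ∏ i, (X - C (lam i))) :
    ((Lstar G).adjMatrix ℝ).charpoly =
      (X ^ 2 - 4) ^ (m - n) *
        ∏ i, ((X - C (lam i)) ^ 2 - C ((d : ℝ) - 2) ^ 2) := by
  subst hn hm
  have h2m : 2 * G.edgeFinset.card = Fintype.card V * d := by
    rw [← G.sum_degrees_eq_twice_card_edges,
      Finset.sum_congr rfl fun v _ => hreg v, Finset.sum_const, Finset.card_univ, smul_eq_mul]
  have hmn : Fintype.card V ≤ G.edgeFinset.card := by
    have h3 : Fintype.card V * 3 ≤ Fintype.card V * d := Nat.mul_le_mul_left _ hd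
    omega
  have key := OLAux.key_poly G d hreg
  have haev : ∀ q : ℝ[X], (aeval q ((G.adjMatrix ℝ).charpoly) : ℝ[X])
      = ((q • (1 : Matrix V V ℝ[X]) - G.adjMatrix ℝ[X]).det) := by
    intro q
    rw [Matrix.charpoly]
    have hdet := RingHom.map_det ((aeval q : ℝ[X] →ₐ[ℝ] ℝ[X]) : ℝ[X] →+* ℝ[X])
      (charmatrix (G.adjMatrix ℝ))
    rw [RingHom.mapMatrix_apply] at hdet
    have hmat : (charmatrix (G.adjMatrix ℝ)).map (aeval q)
        = q • (1 : Matrix V V ℝ[X]) - G.adjMatrix ℝ[X] := by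
      ext u v
      rw [Matrix.map_apply, charmatrix_apply]
      simp only [Matrix.diagonal_apply, Matrix.sub_apply, Matrix.smul_apply, Matrix.one_apply,
        SimpleGraph.adjMatrix_apply, smul_eq_mul, map_sub, aeval_X, aeval_C,
        Polynomial.algebraMap_eq, apply_ite (aeval q (R := ℝ) (A := ℝ[X])),
        map_zero, mul_ite, mul_one, mul_zero, apply_ite (C : ℝ →+* ℝ[X])]
      by_cases h : u = v <;> simp [h, apply_ite (aeval q (R := ℝ) (A := ℝ[X]))]
    rw [← hmat]
    exact hdet
  have hp1 : ((X - C ((d : ℝ) - 2)) • (1 : Matrix V V ℝ[X]) - G.adjMatrix ℝ[X]).det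
      = ∏ i, (X - C (lam i) - C ((d : ℝ) - 2)) := by
    rw [← haev (X - C ((d : ℝ) - 2)), hchar, map_prod]
    refine Finset.prod_congr rfl fun i _ => ?_
    rw [map_sub, aeval_X, aeval_C, Polynomial.algebraMap_eq]
    ring
  have hp2 : ((X + C ((d : ℝ) - 2)) • (1 : Matrix V V ℝ[X]) - G.adjMatrix ℝ[X]).det
      = ∏ i, (X - C (lam i) + C ((d : ℝ) - 2)) := by
    rw [← haev (X + C ((d : ℝ) - 2)), hchar, map_prod]
    refine Finset.prod_congr rfl fun i _ => ?_
    rw [map_sub, aeval_X, aeval_C, Polynomial.algebraMap_eq]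
    ring
  have hprod : (∏ i, (X - C (lam i) - C ((d : ℝ) - 2)))
        * (∏ i, (X - C (lam i) + C ((d : ℝ) - 2)))
      = ∏ i, ((X - C (lam i)) ^ 2 - C ((d : ℝ) - 2) ^ 2) := by
    rw [← Finset.prod_mul_distrib]
    exact Finset.prod_congr rfl fun i _ => by ring
  have hne : ((X : ℝ[X]) ^ 2 - 4) ≠ 0 := by
    intro hcon
    have := congrArg (Polynomial.eval 0) hcon
    simp at this
  have hZ : ((X : ℝ[X]) ^ 2 - 4) ^ Fintype.card V * ((X : ℝ[X]) ^ 2 - 4) ^ Fintype.card V ≠ 0 :=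
    mul_ne_zero (pow_ne_zero _ hne) (pow_ne_zero _ hne)
  apply mul_right_cancel₀ hZ
  rw [key, hp1, hp2, ← hprod]
  have hsplitpow : ((X : ℝ[X]) ^ 2 - 4) ^ G.edgeFinset.card
      = ((X : ℝ[X]) ^ 2 - 4) ^ (G.edgeFinset.card - Fintype.card V)
        * ((X : ℝ[X]) ^ 2 - 4) ^ Fintype.card V := by
    rw [← pow_add, Nat.sub_add_cancel hmn]
  rw [hsplitpow]
  have hBC : ((X : ℝ[X]) - 2) ^ Fintype.card V * ((X : ℝ[X]) + 2) ^ Fintype.card V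
      = ((X : ℝ[X]) ^ 2 - 4) ^ Fintype.card V := by
    rw [← mul_pow]
    congr 1
    ring
  linear_combination (((X : ℝ[X]) ^ 2 - 4) ^ (G.edgeFinset.card - Fintype.card V)
      * ((X : ℝ[X]) ^ 2 - 4) ^ Fintype.card V
      * (∏ i, (X - C (lam i) - C ((d : ℝ) - 2)))
      * (∏ i, (X - C (lam i) + C ((d : ℝ) - 2)))) * hBC
end

section
/- Let G be a connected d-regular graph with d ≥ 3. If all adjacency eigenvalues of G are integers, then all adjacency eigenvalues of L*(G) are integers. -/
open Polynomial Matrix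
open scoped Classical

section aux
variable {V : Type*} [Fintype V] [DecidableEq V] (G : SimpleGraph V)

/-- arc reversal -/
def olRev : OLV G → OLV G := fun a => ⟨(a.1.2, a.1.1), a.2.symm⟩

lemma olRev_olRev (a : OLV G) : olRev G (olRev G a) = a := by
  simp [olRev]

noncomputable def Smat : Matrix (OLV G) V ℝ := fun a u => if a.1.1 = u then 1 else 0
noncomputable def Emat : Matrix (OLV G) V ℝ := fun a u => if a.1.2 = u then 1 else 0
noncomputable def Pmat : Matrix (OLV G) (OLV G) ℝ := fun a b => if a = olRev G b then 1 else 0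

lemma sum_olv (f : V × V → ℝ) :
    ∑ a : OLV G, f a.1 = ∑ p : V × V, if G.Adj p.1 p.2 then f p else 0 := by
  rw [← Finset.sum_filter]
  exact (Finset.sum_subtype _ (by simp) f).symm

lemma StS {d : ℕ} (hreg : G.IsRegularOfDegree d) :
    (Smat G)ᵀ * Smat G = (d : ℝ) • 1 := by
  ext u v
  simp only [Matrix.mul_apply, Matrix.transpose_apply, Smat, ite_mul, one_mul, zero_mul]
  have : ∀ a : OLV G, (if a.1.1 = u then if a.1.1 = v then (1:ℝ) else 0 else 0)
      = (fun p : V × V => if p.1 = u ∧ p.1 = v then (1:ℝ) else 0) a.1 := by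
    intro a; by_cases h1 : a.1.1 = u <;> by_cases h2 : a.1.1 = v <;> simp [h1, h2]
  rw [Finset.sum_congr rfl (fun a _ => this a),
    sum_olv G (fun p => if p.1 = u ∧ p.1 = v then (1:ℝ) else 0), Fintype.sum_prod_type]
  by_cases huv : u = v
  · subst huv
    have : ∀ x : V, (∑ y : V, if G.Adj x y then if x = u ∧ x = u then (1:ℝ) else 0 else 0)
        = if x = u then (G.degree x : ℝ) else 0 := by
      intro x
      by_cases hx : x = u
      · simp only [hx, and_self, if_true, SimpleGraph.degree, ← SimpleGraph.neighborFinset_eq_filter]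
        subst hx
        rw [SimpleGraph.neighborFinset_eq_filter, Finset.card_filter]
        push_cast
        simp
      · simp [hx]
    rw [Finset.sum_congr rfl (fun x _ => this x)]
    simp [hreg u]
  · have : ∀ x y : V, (if G.Adj x y then if x = u ∧ x = v then (1:ℝ) else 0 else 0) = 0 := by
      intro x y
      by_cases h : x = u ∧ x = v
      · exact absurd (h.1.symm.trans h.2) huv    
      · simp [h]
    simp [this, Matrix.one_apply, huv]

lemma StE : (Smat G)ᵀ * Emat G = G.adjMatrix ℝ := by
  ext u v
  simp only [Matrix.mul_apply, Matrix.transpose_apply, Smat, Emat, ite_mul, one_mul, zero_mul]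
  have : ∀ a : OLV G, (if a.1.1 = u then if a.1.2 = v then (1:ℝ) else 0 else 0)
      = (fun p : V × V => if p.1 = u ∧ p.2 = v then (1:ℝ) else 0) a.1 := by
    intro a; by_cases h1 : a.1.1 = u <;> by_cases h2 : a.1.2 = v <;> simp [h1, h2]
  rw [Finset.sum_congr rfl (fun a _ => this a),
    sum_olv G (fun p => if p.1 = u ∧ p.2 = v then (1:ℝ) else 0), Fintype.sum_prod_type]
  have h2 : ∀ x y : V, (if G.Adj x y then if x = u ∧ y = v then (1:ℝ) else 0 else 0)
      = if x = u then (if y = v then (if G.Adj u v then (1:ℝ) else 0) else 0) else 0 := by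
    intro x y
    by_cases hx : x = u <;> by_cases hy : y = v <;> simp [hx, hy]
  rw [Finset.sum_congr rfl fun x _ => Finset.sum_congr rfl fun y _ => h2 x y]
  simp [SimpleGraph.adjMatrix_apply]

lemma EtS : (Emat G)ᵀ * Smat G = G.adjMatrix ℝ := by
  have h := congrArg Matrix.transpose (StE G)
  rwa [Matrix.transpose_mul, Matrix.transpose_transpose, SimpleGraph.transpose_adjMatrix] at h

lemma EtE {d : ℕ} (hreg : G.IsRegularOfDegree d) :
    (Emat G)ᵀ * Emat G = (d : ℝ) • 1 := by
  ext u v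
  simp only [Matrix.mul_apply, Matrix.transpose_apply, Emat, ite_mul, one_mul, zero_mul]
  have : ∀ a : OLV G, (if a.1.2 = u then if a.1.2 = v then (1:ℝ) else 0 else 0)
      = (fun p : V × V => if p.2 = u ∧ p.2 = v then (1:ℝ) else 0) a.1 := by
    intro a; by_cases h1 : a.1.2 = u <;> by_cases h2 : a.1.2 = v <;> simp [h1, h2]
  rw [Finset.sum_congr rfl (fun a _ => this a),
    sum_olv G (fun p => if p.2 = u ∧ p.2 = v then (1:ℝ) else 0), Fintype.sum_prod_type]
  by_cases huv : u = v
  · subst huv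
    have : ∀ x : V, (∑ y : V, if G.Adj x y then if y = u ∧ y = u then (1:ℝ) else 0 else 0)
        = if G.Adj x u then (1:ℝ) else 0 := by
      intro x
      have : ∀ y : V, (if G.Adj x y then if y = u ∧ y = u then (1:ℝ) else 0 else 0)
          = if y = u then (if G.Adj x u then (1:ℝ) else 0) else 0 := by
        intro y; by_cases hy : y = u <;> simp [hy]
      rw [Finset.sum_congr rfl fun y _ => this y, Finset.sum_ite_eq']
      simp
    rw [Finset.sum_congr rfl fun x _ => this x]
    have hcard : (∑ x : V, if G.Adj x u then (1:ℝ) else 0) = (G.degree u : ℝ) := by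
      rw [SimpleGraph.degree, SimpleGraph.neighborFinset_eq_filter, Finset.card_filter]
      push_cast
      simp [G.adj_comm u]
    rw [hcard]
    simp [hreg u]
  · have : ∀ x y : V, (if G.Adj x y then if y = u ∧ y = v then (1:ℝ) else 0 else 0) = 0 := by
      intro x y
      by_cases h : y = u ∧ y = v
      · exact absurd (h.1.symm.trans h.2) huv
      · simp [h]
    simp [this, Matrix.one_apply, huv]

lemma StP : (Smat G)ᵀ * Pmat G = (Emat G)ᵀ := by
  ext u b
  simp only [Matrix.mul_apply, Matrix.transpose_apply, Smat, Pmat, Emat, mul_ite, mul_one,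
    mul_zero]
  have : ∀ a : OLV G, (if a = olRev G b then if a.1.1 = u then (1:ℝ) else 0 else 0)
      = if a = olRev G b then (if b.1.2 = u then (1:ℝ) else 0) else 0 := by
    intro a
    by_cases ha : a = olRev G b
    · subst ha; simp [olRev]; congr
    · simp [ha]
  rw [Finset.sum_congr rfl fun a _ => this a, Finset.sum_ite_eq']
  simp

lemma EtP : (Emat G)ᵀ * Pmat G = (Smat G)ᵀ := by
  ext u b
  simp only [Matrix.mul_apply, Matrix.transpose_apply, Smat, Pmat, Emat, mul_ite, mul_one,
    mul_zero]
  have : ∀ a : OLV G, (if a = olRev G b then if a.1.2 = u then (1:ℝ) else 0 else 0)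
      = if a = olRev G b then (if b.1.1 = u then (1:ℝ) else 0) else 0 := by
    intro a
    by_cases ha : a = olRev G b
    · subst ha; simp [olRev]; congr
    · simp [ha]
  rw [Finset.sum_congr rfl fun a _ => this a, Finset.sum_ite_eq']
  simp

lemma PP : Pmat G * Pmat G = 1 := by
  ext a b
  simp only [Matrix.mul_apply, Pmat, ite_mul, one_mul, zero_mul]
  have : ∀ c : OLV G, (if a = olRev G c then if c = olRev G b then (1:ℝ) else 0 else 0)
      = if c = olRev G b then (if a = b then (1:ℝ) else 0) else 0 := by
    intro c
    by_cases hc : c = olRev G b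
    · subst hc; rw [olRev_olRev]; simp
    · simp [hc]
  rw [Finset.sum_congr rfl fun c _ => this c, Finset.sum_ite_eq']
  simp [Matrix.one_apply]

lemma SEt (a b : OLV G) : (Smat G * (Emat G)ᵀ) a b = if b.1.2 = a.1.1 then (1:ℝ) else 0 := by
  simp only [Matrix.mul_apply, Matrix.transpose_apply, Smat, Emat, ite_mul, one_mul, zero_mul]
  rw [Finset.sum_ite_eq]
  simp

lemma ESt (a b : OLV G) : (Emat G * (Smat G)ᵀ) a b = if b.1.1 = a.1.2 then (1:ℝ) else 0 := by
  simp only [Matrix.mul_apply, Matrix.transpose_apply, Smat, Emat, ite_mul, one_mul, zero_mul]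
  rw [Finset.sum_ite_eq]
  simp

lemma hrev (a b : OLV G) : a = olRev G b ↔ (b.1.2 = a.1.1 ∧ b.1.1 = a.1.2) := by
  constructor
  · rintro rfl; simp [olRev]
  · rintro ⟨h1, h2⟩
    apply Subtype.ext
    apply Prod.ext <;> simp [olRev, h1.symm, h2.symm]

lemma Mdecomp : (Lstar G).adjMatrix ℝ
    = Smat G * (Emat G)ᵀ + Emat G * (Smat G)ᵀ - (2:ℝ) • Pmat G := by
  ext a b
  have ha : a.1.1 ≠ a.1.2 := G.ne_of_adj a.2
  have hb : b.1.1 ≠ b.1.2 := G.ne_of_adj b.2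
  rw [SimpleGraph.adjMatrix_apply]
  simp only [Matrix.sub_apply, Matrix.add_apply, Matrix.smul_apply, SEt, ESt, Pmat,
    SimpleGraph.adjMatrix_apply, Lstar, SimpleGraph.fromRel_adj, olArc, smul_eq_mul]
  simp only [hrev G a b]
  by_cases h1 : b.1.2 = a.1.1 <;> by_cases h2 : b.1.1 = a.1.2
  · have : ¬(a ≠ b ∧ ((a.1.2 = b.1.1 ∧ a.1.1 ≠ b.1.2) ∨ (b.1.2 = a.1.1 ∧ b.1.1 ≠ a.1.2))) := by
      rintro ⟨-, (⟨-, hne⟩ | ⟨-, hne⟩)⟩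
      · exact hne h1.symm
      · exact hne h2
    simp [h1, h2, this]
    norm_num
  · have hne : a ≠ b := by
      rintro rfl; exact ha h1.symm
    simp [h1, h2, hne, fun h : b.1.1 = a.1.2 => h2 h]
  · have hne : a ≠ b := by
      rintro rfl; exact ha h2
    have harc : a.1.2 = b.1.1 ∧ a.1.1 ≠ b.1.2 :=
      ⟨h2.symm, fun h => h1 h.symm⟩
    have hcond : a ≠ b ∧ (a.1.2 = b.1.1 ∧ a.1.1 ≠ b.1.2 ∨ b.1.2 = a.1.1 ∧ b.1.1 ≠ a.1.2) :=
      ⟨hne, Or.inl harc⟩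
    simp only [if_pos hcond, if_pos h2, if_neg h1, if_neg (fun h : b.1.2 = a.1.1 ∧ b.1.1 = a.1.2 => h1 h.1)]
    norm_num
  · have : ¬(a ≠ b ∧ ((a.1.2 = b.1.1 ∧ a.1.1 ≠ b.1.2) ∨ (b.1.2 = a.1.1 ∧ b.1.1 ≠ a.1.2))) := by
      rintro ⟨-, (⟨h, -⟩ | ⟨h, -⟩)⟩
      · exact h2 h.symm
      · exact h1 h
    simp [h1, h2, this]
    intro _ h
    exact absurd h.symm h2
end aux


lemma root_iff_eig {n : Type*} [Fintype n] [DecidableEq n] (M : Matrix n n ℝ) (x : ℝ) :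
    M.charpoly.IsRoot x ↔ ∃ v, v ≠ 0 ∧ M *ᵥ v = x • v := by
  have hdet : M.charpoly.eval x = (x • (1 : Matrix n n ℝ) - M).det := by
    rw [Matrix.charpoly, eval_det, Matrix.matPolyEquiv_charmatrix]
    rw [Polynomial.eval_sub, Polynomial.eval_X, Polynomial.eval_C, Matrix.scalar_apply,
      ← Matrix.smul_one_eq_diagonal]
  rw [Polynomial.IsRoot, hdet, ← Matrix.exists_mulVec_eq_zero_iff]
  constructor
  · rintro ⟨v, hv, h⟩
    refine ⟨v, hv, ?_⟩
    rw [Matrix.sub_mulVec, Matrix.smul_mulVec, Matrix.one_mulVec, sub_eq_zero] at h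
    exact h.symm
  · rintro ⟨v, hv, h⟩
    refine ⟨v, hv, ?_⟩
    rw [Matrix.sub_mulVec, Matrix.smul_mulVec, Matrix.one_mulVec, sub_eq_zero, h]


theorem stmt_1 {V : Type*} [Fintype V] [DecidableEq V] (G : SimpleGraph V)
    (d : ℕ) (hd : 3 ≤ d) (hreg : G.IsRegularOfDegree d) (hconn : G.Connected)
    (hint : ∀ x : ℝ, (G.adjMatrix ℝ).charpoly.IsRoot x → ∃ k : ℤ, x = k) :
    ∀ x : ℝ, ((Lstar G).adjMatrix ℝ).charpoly.IsRoot x → ∃ k : ℤ, x = k := by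
  intro x hroot
  obtain ⟨v, hv, hMv⟩ := (root_iff_eig _ x).mp hroot
  set A := G.adjMatrix ℝ with hA
  set a : V → ℝ := (Smat G)ᵀ *ᵥ v with ha
  set b : V → ℝ := (Emat G)ᵀ *ᵥ v with hb
  have hSM : (Smat G)ᵀ * ((Lstar G).adjMatrix ℝ)
      = (d:ℝ) • (Emat G)ᵀ + A * (Smat G)ᵀ - (2:ℝ) • (Emat G)ᵀ := by
    rw [Mdecomp G, Matrix.mul_sub, Matrix.mul_add, ← Matrix.mul_assoc, ← Matrix.mul_assoc,
      StS G hreg, StE G, Matrix.mul_smul, StP G, Matrix.smul_mul, Matrix.one_mul]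
  have hEM : (Emat G)ᵀ * ((Lstar G).adjMatrix ℝ)
      = A * (Emat G)ᵀ + (d:ℝ) • (Smat G)ᵀ - (2:ℝ) • (Smat G)ᵀ := by
    rw [Mdecomp G, Matrix.mul_sub, Matrix.mul_add, ← Matrix.mul_assoc, ← Matrix.mul_assoc,
      EtE G hreg, EtS G, Matrix.mul_smul, EtP G, Matrix.smul_mul, Matrix.one_mul]
  have h1 : A *ᵥ a + ((d:ℝ) - 2) • b = x • a := by
    have h := congrArg (fun w => (Smat G)ᵀ *ᵥ w) hMv
    simp only [Matrix.mulVec_mulVec, Matrix.mulVec_smul] at h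
    rw [hSM, Matrix.sub_mulVec, Matrix.add_mulVec, Matrix.smul_mulVec,
      Matrix.smul_mulVec, ← Matrix.mulVec_mulVec] at h
    rw [sub_smul]
    calc A *ᵥ ((Smat G)ᵀ *ᵥ v) + ((d:ℝ) • b - (2:ℝ) • b)
        = (d:ℝ) • b + A *ᵥ ((Smat G)ᵀ *ᵥ v) - (2:ℝ) • b := by abel
      _ = x • a := h
  have h2 : A *ᵥ b + ((d:ℝ) - 2) • a = x • b := by
    have h := congrArg (fun w => (Emat G)ᵀ *ᵥ w) hMv
    simp only [Matrix.mulVec_mulVec, Matrix.mulVec_smul] at h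
    rw [hEM, Matrix.sub_mulVec, Matrix.add_mulVec, Matrix.smul_mulVec,
      Matrix.smul_mulVec, ← Matrix.mulVec_mulVec] at h
    rw [sub_smul]
    calc A *ᵥ ((Emat G)ᵀ *ᵥ v) + ((d:ℝ) • a - (2:ℝ) • a)
        = A *ᵥ ((Emat G)ᵀ *ᵥ v) + (d:ℝ) • a - (2:ℝ) • a := by abel
      _ = x • b := h
  have e1 : A *ᵥ a = x • a - ((d:ℝ) - 2) • b := by rw [← h1]; abel
  have e2 : A *ᵥ b = x • b - ((d:ℝ) - 2) • a := by rw [← h2]; abel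
  by_cases hab : a + b ≠ 0
  · have hsum : A *ᵥ (a + b) = (x - ((d:ℝ) - 2)) • (a + b) := by
      rw [Matrix.mulVec_add, e1, e2]
      module
    obtain ⟨k, hk⟩ := hint _ ((root_iff_eig A _).mpr ⟨a + b, hab, hsum⟩)
    exact ⟨k + d - 2, by push_cast; linarith⟩
  by_cases hab' : a - b ≠ 0
  · have hdiff : A *ᵥ (a - b) = (x + ((d:ℝ) - 2)) • (a - b) := by
      rw [Matrix.mulVec_sub, e1, e2]
      module
    obtain ⟨k, hk⟩ := hint _ ((root_iff_eig A _).mpr ⟨a - b, hab', hdiff⟩)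
    exact ⟨k - d + 2, by push_cast; linarith⟩
  push_neg at hab hab'
  have ha0 : a = 0 := by
    funext i
    have i1 := congrFun hab i
    have i2 := congrFun hab' i
    simp only [Pi.add_apply, Pi.sub_apply, Pi.zero_apply] at i1 i2 ⊢
    linarith
  have hb0 : b = 0 := by
    funext i
    have i1 := congrFun hab i
    have i2 := congrFun hab' i
    simp only [Pi.add_apply, Pi.sub_apply, Pi.zero_apply] at i1 i2 ⊢
    linarith
  have hMv' : x • v = (-2:ℝ) • (Pmat G *ᵥ v) := by
    rw [← hMv, Mdecomp G, Matrix.sub_mulVec, Matrix.add_mulVec, ← Matrix.mulVec_mulVec,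
      ← Matrix.mulVec_mulVec, ← hb, ← ha, ha0, hb0, Matrix.mulVec_zero, Matrix.mulVec_zero,
      Matrix.smul_mulVec]
    simp
  have hPv : x • (Pmat G *ᵥ v) = (-2:ℝ) • v := by
    have h := congrArg (fun w => Pmat G *ᵥ w) hMv'
    simp only [Matrix.mulVec_smul, Matrix.mulVec_mulVec, PP G, Matrix.one_mulVec] at h
    exact h
  have hsq : (x * x) • v = (4:ℝ) • v := by
    rw [← smul_smul, hMv', smul_comm, hPv]
    rw [smul_smul]
    norm_num
  obtain ⟨i, hi⟩ := Function.ne_iff.mp hv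
  have hxx : x * x = 4 := by
    have h := congrFun hsq i
    simp only [Pi.smul_apply, smul_eq_mul] at h
    have := sub_eq_zero.mpr h
    rw [← sub_mul] at this
    rcases mul_eq_zero.mp this with h' | h'
    · linarith [sub_eq_zero.mp h']
    · exact absurd h' hi
  have : (x - 2) * (x + 2) = 0 := by ring_nf; linarith
  rcases mul_eq_zero.mp this with h' | h'
  · exact ⟨2, by push_cast; linarith [sub_eq_zero.mp h']⟩
  · exact ⟨-2, by push_cast; linarith [eq_neg_of_add_eq_zero_left h']⟩
end

section
/- Let G be a connected d-regular graph (d ≥ 3) with n vertices, m edges and adjacency eigenvalues λ₁,...,λₙ. Then the characteristic polynomial of the skew-symmetric adjacency matrix of the oriented line graph L⃗(G) equals x^{2(m−n)} · ∏_{i=1}^{n} (x² + d² − λᵢ²). -/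
open Polynomial Matrix
open scoped Classical
set_option synthInstance.maxHeartbeats 1000000
set_option maxHeartbeats 1000000


lemma ite_one_mul_ite_one {P Q : Prop} [Decidable P] [Decidable Q] :
    ((if P then (1:ℝ) else 0) * (if Q then (1:ℝ) else 0)) = if P ∧ Q then 1 else 0 := by
  by_cases hP : P <;> by_cases hQ : Q <;> simp [hP, hQ]

lemma charmatrix_map_eval₂ {R S : Type*} [CommRing R] [CommRing S] {γ : Type*} [Fintype γ]
    [DecidableEq γ] (B : Matrix γ γ R) (f : R[X] →+* S) :
    (charmatrix B).map f = f X • (1 : Matrix γ γ S) - B.map (f.comp (C : R →+* R[X])) := by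
  ext i j
  by_cases h : i = j
  · subst h
    simp [charmatrix_apply_eq, Matrix.one_apply_eq, smul_eq_mul]
  · simp [charmatrix_apply_ne _ _ _ h, Matrix.one_apply_ne h, h]


lemma det_charmatrix_map_aux {γ δ : Type*} [Fintype γ] [Fintype δ] [DecidableEq γ]
    [DecidableEq δ] (U : Matrix γ δ ℝ) (W : Matrix δ γ ℝ)
    (hx : (algebraMap ℝ[X] (RatFunc ℝ)) X ≠ 0) :
    (algebraMap ℝ[X] (RatFunc ℝ)) ((U * W).charpoly)
      = ((algebraMap ℝ[X] (RatFunc ℝ)) X) ^ (Fintype.card γ) *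
        Matrix.det (1 - ((algebraMap ℝ[X] (RatFunc ℝ)) X)⁻¹ •
          (U.map ((algebraMap ℝ[X] (RatFunc ℝ)).comp C) * W.map ((algebraMap ℝ[X] (RatFunc ℝ)).comp C))) := by
  set f : ℝ[X] →+* RatFunc ℝ := (algebraMap ℝ[X] (RatFunc ℝ) : ℝ[X] →+* RatFunc ℝ) with hf
  set x : RatFunc ℝ := f X with hxdef
  have e1 : x • (1 : Matrix γ γ (RatFunc ℝ)) - (U.map (f.comp C) * W.map (f.comp C))
      = x • ((1: Matrix γ γ (RatFunc ℝ)) - x⁻¹ • (U.map (f.comp C) * W.map (f.comp C))) := by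
    rw [smul_sub, smul_smul, mul_inv_cancel₀ hx, one_smul]
  rw [Matrix.charpoly, RingHom.map_det, RingHom.mapMatrix_apply, charmatrix_map_eval₂,
    Matrix.map_mul, e1, Matrix.det_smul]

lemma pow_mul_charpoly_mul_comm {α β : Type*} [Fintype α] [Fintype β] [DecidableEq α]
    [DecidableEq β] (P : Matrix α β ℝ) (Q : Matrix β α ℝ) :
    (X:ℝ[X]) ^ (Fintype.card β) * (P * Q).charpoly
      = (X:ℝ[X]) ^ (Fintype.card α) * (Q * P).charpoly := by
  have hinj : Function.Injective (algebraMap ℝ[X] (RatFunc ℝ)) := IsFractionRing.injective _ _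
  apply hinj
  set f : ℝ[X] →+* RatFunc ℝ := (algebraMap ℝ[X] (RatFunc ℝ) : ℝ[X] →+* RatFunc ℝ) with hf
  have hx : f X ≠ 0 := by
    intro h
    exact Polynomial.X_ne_zero (hinj (by simpa using h))
  set x : RatFunc ℝ := f X with hxdef
  have hcomm : Matrix.det (1 - x⁻¹ • (P.map (f.comp C) * Q.map (f.comp C)))
      = Matrix.det (1 - x⁻¹ • (Q.map (f.comp C) * P.map (f.comp C))) := by
    have e2 : (1 : Matrix α α (RatFunc ℝ)) - x⁻¹ • (P.map (f.comp C) * Q.map (f.comp C))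
        = 1 + P.map (f.comp C) * ((-x⁻¹) • Q.map (f.comp C)) := by
      rw [Matrix.mul_smul, neg_smul, ← sub_eq_add_neg]
    have e3 : (1 : Matrix β β (RatFunc ℝ)) - x⁻¹ • (Q.map (f.comp C) * P.map (f.comp C))
        = 1 + ((-x⁻¹) • Q.map (f.comp C)) * P.map (f.comp C) := by
      rw [Matrix.smul_mul, neg_smul, ← sub_eq_add_neg]
    rw [e2, e3, Matrix.det_one_add_mul_comm]
  rw [_root_.map_mul, _root_.map_mul, map_pow, map_pow, det_charmatrix_map_aux P Q hx, det_charmatrix_map_aux Q P hx, hcomm, ← hxdef]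
  ring

theorem stmt_2 {V : Type*} [Fintype V] [DecidableEq V] (G : SimpleGraph V)
    (d n m : ℕ) (hd : 3 ≤ d) (hreg : G.IsRegularOfDegree d) (hconn : G.Connected)
    (hn : Fintype.card V = n) (hm : G.edgeFinset.card = m)
    (lam : Fin n → ℝ)
    (hchar : (G.adjMatrix ℝ).charpoly = ∏ i, (X - C (lam i))) :
    (Matrix.of fun a b : OLV G =>
        if olArc G a b then (1 : ℝ) else if olArc G b a then -1 else 0).charpoly =
      X ^ (2 * (m - n)) * ∏ i, (X ^ 2 + C ((d : ℝ) ^ 2 - lam i ^ 2)) := by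
  classical
  set A := G.adjMatrix ℝ with hA
  set T : Matrix (OLV G) V ℝ := Matrix.of (fun a v => if a.1.2 = v then (1:ℝ) else 0) with hT
  set Hm : Matrix (OLV G) V ℝ := Matrix.of (fun a v => if a.1.1 = v then (1:ℝ) else 0) with hHm
  -- cardinalities
  have hcardOLV : Fintype.card (OLV G) = 2 * m := by
    rw [← hm, ← SimpleGraph.dart_card_eq_twice_card_edges]
    exact Fintype.card_congr
      ⟨fun a => ⟨a.1, a.2⟩, fun dd => ⟨dd.toProd, dd.adj⟩, fun a => rfl, fun dd => rfl⟩
  have hmn : n ≤ m := by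
    have h2m : 2 * m = n * d := by
      rw [← hm, ← SimpleGraph.sum_degrees_eq_twice_card_edges]
      simp only [hreg _]
      rw [Finset.sum_const, Finset.card_univ, hn, smul_eq_mul]
    have h3 : n * 3 ≤ n * d := Nat.mul_le_mul_left n hd
    omega
  -- filter cardinalities
  have hfilter1 : ∀ u : V, (Finset.univ.filter (fun a : OLV G => a.1.1 = u)).card = d := by
    intro u
    have hb : (Finset.univ.filter (fun a : OLV G => a.1.1 = u)).card
        = (G.neighborFinset u).card := by
      apply Finset.card_bij (fun a _ => a.1.2)
      · intro a ha
        simp only [Finset.mem_filter, Finset.mem_univ, true_and] at ha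
        rw [SimpleGraph.mem_neighborFinset, ← ha]
        exact a.2
      · intro a ha b hb hab
        simp only [Finset.mem_filter, Finset.mem_univ, true_and] at ha hb
        exact Subtype.ext (Prod.ext (ha.trans hb.symm) hab)
      · intro v hv
        rw [SimpleGraph.mem_neighborFinset] at hv
        exact ⟨⟨(u, v), hv⟩, by simp, rfl⟩
    rw [hb]
    exact hreg u
  have hfilter2 : ∀ u : V, (Finset.univ.filter (fun a : OLV G => a.1.2 = u)).card = d := by
    intro u
    have hb : (Finset.univ.filter (fun a : OLV G => a.1.2 = u)).card
        = (G.neighborFinset u).card := by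
      apply Finset.card_bij (fun a _ => a.1.1)
      · intro a ha
        simp only [Finset.mem_filter, Finset.mem_univ, true_and] at ha
        rw [SimpleGraph.mem_neighborFinset]
        exact ((show G.Adj a.1.1 u by rw [← ha]; exact a.2)).symm
      · intro a ha b hb hab
        simp only [Finset.mem_filter, Finset.mem_univ, true_and] at ha hb
        exact Subtype.ext (Prod.ext hab (ha.trans hb.symm))
      · intro v hv
        rw [SimpleGraph.mem_neighborFinset] at hv
        exact ⟨⟨(v, u), hv.symm⟩, by simp, rfl⟩
    rw [hb]
    exact hreg u
  -- entry sums
  have hsum_adj : ∀ u v : V,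
      (∑ a : OLV G, if a.1.1 = u ∧ a.1.2 = v then (1:ℝ) else 0) = if G.Adj u v then 1 else 0 := by
    intro u v
    by_cases h : G.Adj u v
    · rw [if_pos h, Finset.sum_eq_single (⟨(u,v), h⟩ : OLV G)]
      · simp
      · intro a _ hne
        rw [if_neg]
        rintro ⟨h1, h2⟩
        exact hne (Subtype.ext (Prod.ext h1 h2))
      · intro habs; exact absurd (Finset.mem_univ _) habs
    · rw [if_neg h, Finset.sum_eq_zero]
      intro a _
      rw [if_neg]
      rintro ⟨h1, h2⟩
      exact h (by rw [← h1, ← h2]; exact a.2)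
  -- products
  have hHT : Hmᵀ * T = A := by
    ext u v
    rw [Matrix.mul_apply]
    simp only [hHm, hT, Matrix.transpose_apply, Matrix.of_apply, ite_one_mul_ite_one]
    rw [hsum_adj u v, hA, SimpleGraph.adjMatrix_apply]
  have hTH : Tᵀ * Hm = A := by
    ext u v
    rw [Matrix.mul_apply]
    simp only [hHm, hT, Matrix.transpose_apply, Matrix.of_apply, ite_one_mul_ite_one]
    have hcg : ∀ a : OLV G, (if a.1.2 = u ∧ a.1.1 = v then (1:ℝ) else 0)
        = if a.1.1 = v ∧ a.1.2 = u then 1 else 0 := fun a => if_congr and_comm rfl rfl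
    rw [Finset.sum_congr rfl (fun a _ => hcg a), hsum_adj v u, hA, SimpleGraph.adjMatrix_apply,
      G.adj_comm v u]
  have hHH : Hmᵀ * Hm = (d:ℝ) • (1 : Matrix V V ℝ) := by
    ext u v
    rw [Matrix.mul_apply]
    simp only [hHm, Matrix.transpose_apply, Matrix.of_apply, ite_one_mul_ite_one]
    by_cases h : u = v
    · subst h
      simp only [and_self]
      rw [Finset.sum_boole, hfilter1 u, Matrix.smul_apply, Matrix.one_apply_eq, smul_eq_mul,
        mul_one]
    · rw [Finset.sum_eq_zero, Matrix.smul_apply, Matrix.one_apply_ne h, smul_eq_mul, mul_zero]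
      intro a _
      rw [if_neg]
      rintro ⟨h1, h2⟩
      exact h (h1.symm.trans h2)
  have hTT : Tᵀ * T = (d:ℝ) • (1 : Matrix V V ℝ) := by
    ext u v
    rw [Matrix.mul_apply]
    simp only [hT, Matrix.transpose_apply, Matrix.of_apply, ite_one_mul_ite_one]
    by_cases h : u = v
    · subst h
      simp only [and_self]
      rw [Finset.sum_boole, hfilter2 u, Matrix.smul_apply, Matrix.one_apply_eq, smul_eq_mul,
        mul_one]
    · rw [Finset.sum_eq_zero, Matrix.smul_apply, Matrix.one_apply_ne h, smul_eq_mul, mul_zero]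
      intro a _
      rw [if_neg]
      rintro ⟨h1, h2⟩
      exact h (h1.symm.trans h2)
  -- S decomposition
  have hS : (Matrix.of fun a b : OLV G =>
      if olArc G a b then (1 : ℝ) else if olArc G b a then -1 else 0) = T * Hmᵀ - Hm * Tᵀ := by
    ext a b
    have e1 : ∀ (x y : V), (∑ w : V, (if x = w then (1:ℝ) else 0) * (if y = w then 1 else 0))
        = if x = y then 1 else 0 := by
      intro x y
      by_cases h : x = y
      · subst h
        rw [if_pos rfl, Finset.sum_eq_single x]
        · simp
        · intro w _ hw; rw [if_neg (fun hc => hw hc.symm), zero_mul]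
        · intro habs; exact absurd (Finset.mem_univ _) habs
      · rw [if_neg h, Finset.sum_eq_zero]
        intro w _
        by_cases h1 : x = w
        · rw [if_neg (fun hc : y = w => h (h1.trans hc.symm)), mul_zero]
        · rw [if_neg h1, zero_mul]
    rw [Matrix.sub_apply, Matrix.mul_apply, Matrix.mul_apply]
    simp only [hT, hHm, Matrix.transpose_apply, Matrix.of_apply]
    rw [e1 a.1.2 b.1.1, e1 a.1.1 b.1.2]
    by_cases h1 : a.1.2 = b.1.1 <;> by_cases h2 : a.1.1 = b.1.2
    · have hab : ¬ olArc G a b := fun h => h.2 h2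
      have hba : ¬ olArc G b a := fun h => h.2 h1.symm
      rw [if_neg hab, if_neg hba, if_pos h1, if_pos h2]; norm_num
    · have hab : olArc G a b := ⟨h1, h2⟩
      rw [if_pos hab, if_pos h1, if_neg h2]; norm_num
    · have hab : ¬ olArc G a b := fun h => h1 h.1
      have hba : olArc G b a := ⟨h2.symm, fun hc => h1 hc.symm⟩
      rw [if_neg hab, if_pos hba, if_neg h1, if_pos h2]; norm_num
    · have hab : ¬ olArc G a b := fun h => h1 h.1
      have hba : ¬ olArc G b a := fun h => h2 h.1.symm
      rw [if_neg hab, if_neg hba, if_neg h1, if_neg h2]; norm_num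
    -- block matrix decomposition
  set M : Matrix (OLV G) (V ⊕ V) ℝ := Matrix.fromCols T (-Hm) with hM
  set N : Matrix (V ⊕ V) (OLV G) ℝ := Matrix.fromRows Hmᵀ Tᵀ with hN
  have hMN : M * N = T * Hmᵀ - Hm * Tᵀ := by
    rw [hM, hN, Matrix.fromCols_mul_fromRows, Matrix.neg_mul, ← sub_eq_add_neg]
  have hNM : N * M = Matrix.fromBlocks A (-((d:ℝ) • 1)) ((d:ℝ) • 1) (-A) := by
    rw [hM, hN, Matrix.fromRows_mul_fromCols, hHT, hTT, Matrix.mul_neg, Matrix.mul_neg,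
      hHH, hTH]
  -- polynomial matrices
  have hcm : ∀ B : Matrix V V ℝ,
      charmatrix B = (X:ℝ[X]) • (1 : Matrix V V ℝ[X]) - B.map (C : ℝ →+* ℝ[X]) := by
    intro B
    ext i j
    by_cases h : i = j
    · subst h
      simp [charmatrix_apply_eq, Matrix.one_apply_eq, smul_eq_mul]
    · simp [charmatrix_apply_ne _ _ _ h, Matrix.one_apply_ne h]
  have hnegmap : ∀ B : Matrix V V ℝ,
      (-B).map (C : ℝ →+* ℝ[X]) = -(B.map (C : ℝ →+* ℝ[X])) := by
    intro B; ext i j; simp [Matrix.map_apply]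
  have hcmneg : charmatrix (-A) = (X:ℝ[X]) • (1 : Matrix V V ℝ[X]) + A.map (C : ℝ →+* ℝ[X]) := by
    rw [hcm (-A), hnegmap, sub_neg_eq_add]
  set cd : ℝ[X] := C ((d:ℝ)) with hcd
  have hmapsmul : ((d:ℝ) • (1:Matrix V V ℝ)).map (C : ℝ →+* ℝ[X])
      = cd • (1 : Matrix V V ℝ[X]) := by
    ext i j
    by_cases h : i = j <;> simp [h, Matrix.one_apply, Matrix.map_apply, hcd]
  set W1 : Matrix (V ⊕ V) (V ⊕ V) ℝ[X] :=
    Matrix.fromBlocks ((X:ℝ[X]) • 1 - A.map (C : ℝ →+* ℝ[X])) (cd • 1) (-(cd • 1))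
      ((X:ℝ[X]) • 1 + A.map (C : ℝ →+* ℝ[X])) with hW1
  set W2 : Matrix (V ⊕ V) (V ⊕ V) ℝ[X] :=
    Matrix.fromBlocks ((X:ℝ[X]) • 1 + A.map (C : ℝ →+* ℝ[X])) (-(cd • 1)) (cd • 1)
      ((X:ℝ[X]) • 1 - A.map (C : ℝ →+* ℝ[X])) with hW2
  have hcharNM : charmatrix (N * M) = W1 := by
    rw [hNM, charmatrix_fromBlocks, hcm A, hcmneg, hnegmap, hmapsmul, neg_neg, hW1]
  set D : Matrix V V ℝ[X] :=
    ((X:ℝ[X])^2 + C ((d:ℝ)^2)) • 1 - (A.map (C : ℝ →+* ℝ[X])) * (A.map (C : ℝ →+* ℝ[X])) with hD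
  have hsmul1 : ∀ (r : ℝ[X]) (B : Matrix V V ℝ[X]), (r • (1:Matrix V V ℝ[X])) * B = r • B := by
    intro r B; rw [Matrix.smul_mul, Matrix.one_mul]
  have hsmul2 : ∀ (r : ℝ[X]) (B : Matrix V V ℝ[X]), B * (r • (1:Matrix V V ℝ[X])) = r • B := by
    intro r B; rw [Matrix.mul_smul, Matrix.mul_one]
  have hprodm : ((X:ℝ[X]) • 1 - A.map (C : ℝ →+* ℝ[X])) * ((X:ℝ[X]) • 1 + A.map (C : ℝ →+* ℝ[X]))
      = ((X:ℝ[X])^2) • 1 - (A.map (C : ℝ →+* ℝ[X])) * (A.map (C : ℝ →+* ℝ[X])) := by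
    simp only [Matrix.sub_mul, Matrix.mul_add, Matrix.add_mul, Matrix.mul_sub, hsmul1, hsmul2,
      smul_smul, ← pow_two]
    module
  have hprodp : ((X:ℝ[X]) • 1 + A.map (C : ℝ →+* ℝ[X])) * ((X:ℝ[X]) • 1 - A.map (C : ℝ →+* ℝ[X]))
      = ((X:ℝ[X])^2) • 1 - (A.map (C : ℝ →+* ℝ[X])) * (A.map (C : ℝ →+* ℝ[X])) := by
    simp only [Matrix.sub_mul, Matrix.mul_add, Matrix.add_mul, Matrix.mul_sub, hsmul1, hsmul2,
      smul_smul, ← pow_two]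
    module
  have hcdcd : (cd • (1:Matrix V V ℝ[X])) * (cd • 1) = (C ((d:ℝ)^2)) • 1 := by
    rw [hsmul1, smul_smul, hcd, ← _root_.map_mul, ← pow_two]
  have hW12 : W1 * W2 = Matrix.fromBlocks D 0 0 D := by
    rw [hW1, hW2, Matrix.fromBlocks_multiply]
    have b11 : ((X:ℝ[X]) • 1 - A.map (C : ℝ →+* ℝ[X])) * ((X:ℝ[X]) • 1 + A.map (C : ℝ →+* ℝ[X]))
        + (cd • 1) * (cd • 1) = D := by
      rw [hprodm, hcdcd, hD, add_smul]
      abel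
    have b12 : ((X:ℝ[X]) • 1 - A.map (C : ℝ →+* ℝ[X])) * (-(cd • 1))
        + (cd • 1) * ((X:ℝ[X]) • 1 - A.map (C : ℝ →+* ℝ[X])) = 0 := by
      rw [Matrix.mul_neg, hsmul2, hsmul1]
      abel
    have b21 : (-(cd • 1)) * ((X:ℝ[X]) • 1 + A.map (C : ℝ →+* ℝ[X]))
        + ((X:ℝ[X]) • 1 + A.map (C : ℝ →+* ℝ[X])) * (cd • 1) = 0 := by
      rw [Matrix.neg_mul, hsmul1, hsmul2]
      abel
    have b22 : (-(cd • 1)) * (-(cd • 1))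
        + ((X:ℝ[X]) • 1 + A.map (C : ℝ →+* ℝ[X])) * ((X:ℝ[X]) • 1 - A.map (C : ℝ →+* ℝ[X])) = D := by
      rw [Matrix.neg_mul, Matrix.mul_neg, neg_neg, hcdcd, hprodp, hD, add_smul]
      abel
    rw [b11, b12, b21, b22]
  have hdetW2 : W2.det = W1.det := by
    have hsub : W1.submatrix Sum.swap Sum.swap = W2 := by
      rw [hW1, hW2, Matrix.fromBlocks_submatrix_sum_swap_sum_swap]
    rw [← hsub]
    exact Matrix.det_submatrix_equiv_self (Equiv.sumComm V V) W1
  -- charpoly of A*A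
  have hmapAA : (A*A).map (C : ℝ →+* ℝ[X])
      = (A.map (C : ℝ →+* ℝ[X])) * (A.map (C : ℝ →+* ℝ[X])) := Matrix.map_mul
  set φ0 : ℝ[X] →+* ℝ[X] := eval₂RingHom (C : ℝ →+* ℝ[X]) ((X:ℝ[X])^2) with hφ0
  have hφ0C : φ0.comp (C : ℝ →+* ℝ[X]) = (C : ℝ →+* ℝ[X]) :=
    RingHom.ext fun r => Polynomial.eval₂_C _ _
  have hφ0X : φ0 X = (X:ℝ[X])^2 := Polynomial.eval₂_X _ _
  have hstep1 : φ0 ((A*A).charpoly)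
      = (((X:ℝ[X])^2) • (1:Matrix V V ℝ[X])
          - (A.map (C : ℝ →+* ℝ[X])) * (A.map (C : ℝ →+* ℝ[X]))).det := by
    rw [Matrix.charpoly, RingHom.map_det, RingHom.mapMatrix_apply, charmatrix_map_eval₂, hφ0C,
      hφ0X, hmapAA]
  have hstep2 : (((X:ℝ[X])^2) • (1:Matrix V V ℝ[X])
        - (A.map (C : ℝ →+* ℝ[X])) * (A.map (C : ℝ →+* ℝ[X]))).det
      = A.charpoly * (((X:ℝ[X]) • (1:Matrix V V ℝ[X])) + A.map (C : ℝ →+* ℝ[X])).det := by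
    rw [← hprodm, Matrix.det_mul, Matrix.charpoly, hcm A]
  have hdetplus : (((X:ℝ[X]) • (1:Matrix V V ℝ[X])) + A.map (C : ℝ →+* ℝ[X])).det
      = ∏ i, ((X:ℝ[X]) + C (lam i)) := by
    set ψ : ℝ[X] →+* ℝ[X] := eval₂RingHom (C : ℝ →+* ℝ[X]) (-(X:ℝ[X])) with hψ
    have hψC : ψ.comp (C : ℝ →+* ℝ[X]) = (C : ℝ →+* ℝ[X]) := RingHom.ext fun r => Polynomial.eval₂_C _ _
    have hψX : ψ X = -(X:ℝ[X]) := Polynomial.eval₂_X _ _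
    have e1 : ψ (A.charpoly)
        = (-1:ℝ[X])^n * (((X:ℝ[X]) • (1:Matrix V V ℝ[X])) + A.map (C : ℝ →+* ℝ[X])).det := by
      rw [Matrix.charpoly, RingHom.map_det, RingHom.mapMatrix_apply, charmatrix_map_eval₂, hψC,
        hψX]
      have e2 : (-(X:ℝ[X])) • (1:Matrix V V ℝ[X]) - A.map (C : ℝ →+* ℝ[X])
          = -(((X:ℝ[X]) • (1:Matrix V V ℝ[X])) + A.map (C : ℝ →+* ℝ[X])) := by
        rw [neg_add, neg_smul, sub_eq_add_neg]
      rw [e2, Matrix.det_neg, hn]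
    have e3 : ψ (A.charpoly) = (-1:ℝ[X])^n * ∏ i, ((X:ℝ[X]) + C (lam i)) := by
      rw [hchar, map_prod]
      have e4 : ∀ i : Fin n, ψ ((X:ℝ[X]) - C (lam i)) = (-1) * ((X:ℝ[X]) + C (lam i)) := by
        intro i
        have hc : ψ (C (lam i)) = C (lam i) := Polynomial.eval₂_C _ _
        rw [_root_.map_sub, hψX, hc]
        ring
      rw [Finset.prod_congr rfl (fun i _ => e4 i), Finset.prod_mul_distrib, Finset.prod_const,
        Finset.card_univ, Fintype.card_fin]
    have hne : ((-1:ℝ[X]))^n ≠ 0 := pow_ne_zero _ (neg_ne_zero.mpr one_ne_zero)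
    exact mul_left_cancel₀ hne (e1.symm.trans e3)
  have hφ0prod : φ0 (∏ i, ((X:ℝ[X]) - C (lam i ^ 2)))
      = ∏ i, (((X:ℝ[X]))^2 - C (lam i ^ 2)) := by
    rw [map_prod]
    refine Finset.prod_congr rfl fun i _ => ?_
    have hc : φ0 (C (lam i ^ 2)) = C (lam i ^ 2) := Polynomial.eval₂_C _ _
    rw [_root_.map_sub, hφ0X, hc]
  have hprodfact : (∏ i, ((X:ℝ[X]) - C (lam i))) * (∏ i, ((X:ℝ[X]) + C (lam i)))
      = ∏ i, (((X:ℝ[X]))^2 - C (lam i ^ 2)) := by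
    rw [← Finset.prod_mul_distrib]
    refine Finset.prod_congr rfl fun i _ => ?_
    have hc : C (lam i ^ 2) = (C (lam i))^2 := by rw [_root_.map_pow]
    rw [hc]; ring
  have hφ0eq : φ0 ((A*A).charpoly) = φ0 (∏ i, ((X:ℝ[X]) - C (lam i ^ 2))) := by
    rw [hstep1, hstep2, hdetplus, hchar, hprodfact, hφ0prod]
  have hcomp : ∀ p : ℝ[X], φ0 p = p.comp ((X:ℝ[X])^2) := fun p => rfl
  have hqAA : (A*A).charpoly = ∏ i, ((X:ℝ[X]) - C (lam i ^ 2)) := by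
    have hzero : (A*A).charpoly - ∏ i, ((X:ℝ[X]) - C (lam i ^ 2)) = 0 := by
      apply Polynomial.eq_zero_of_infinite_isRoot
      apply Set.Infinite.mono ?_ (Set.Ici_infinite (0:ℝ))
      intro x hx
      have ht := congrArg (Polynomial.eval (Real.sqrt x)) hφ0eq
      rw [hcomp, hcomp, Polynomial.eval_comp, Polynomial.eval_comp, Polynomial.eval_pow,
        Polynomial.eval_X, Real.sq_sqrt (Set.mem_Ici.mp hx)] at ht
      show Polynomial.IsRoot _ x
      rw [Polynomial.IsRoot.def, Polynomial.eval_sub, ht, sub_self]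
    exact sub_eq_zero.mp hzero
  -- determinant of D
  set Pr : ℝ[X] := ∏ i, ((X:ℝ[X])^2 + C ((d:ℝ)^2 - lam i^2)) with hPr
  set φ1 : ℝ[X] →+* ℝ[X] := eval₂RingHom (C : ℝ →+* ℝ[X]) ((X:ℝ[X])^2 + C ((d:ℝ)^2)) with hφ1
  have hφ1C : φ1.comp (C : ℝ →+* ℝ[X]) = (C : ℝ →+* ℝ[X]) := RingHom.ext fun r => Polynomial.eval₂_C _ _
  have hφ1X : φ1 X = (X:ℝ[X])^2 + C ((d:ℝ)^2) := Polynomial.eval₂_X _ _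
  have hdetD : D.det = Pr := by
    have h1 : φ1 ((A*A).charpoly) = D.det := by
      rw [Matrix.charpoly, RingHom.map_det, RingHom.mapMatrix_apply, charmatrix_map_eval₂,
        hφ1C, hφ1X, hmapAA, hD]
    rw [← h1, hqAA, map_prod, hPr]
    refine Finset.prod_congr rfl fun i _ => ?_
    have hc : φ1 (C (lam i ^ 2)) = C (lam i ^ 2) := Polynomial.eval₂_C _ _
    rw [_root_.map_sub, hφ1X, hc,
      show C ((d:ℝ)^2 - lam i^2) = C ((d:ℝ)^2) - C (lam i^2) from _root_.map_sub C _ _]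
    ring
  -- charpoly of N*M
  have hcharW1 : (N * M).charpoly = W1.det := by rw [Matrix.charpoly, hcharNM]
  have hsqq : (N*M).charpoly * (N*M).charpoly = Pr * Pr := by
    rw [hcharW1]
    calc W1.det * W1.det = W1.det * W2.det := by rw [hdetW2]
    _ = (W1 * W2).det := (Matrix.det_mul _ _).symm
    _ = D.det * D.det := by rw [hW12, Matrix.det_fromBlocks_zero₁₂]
    _ = Pr * Pr := by rw [hdetD]
  have hmon1 : (N*M).charpoly.Monic := Matrix.charpoly_monic _
  have hmonPr : Pr.Monic := by
    rw [hPr]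
    exact monic_prod_of_monic _ _ fun i _ => monic_X_pow_add_C _ two_ne_zero
  have hNMP : (N*M).charpoly = Pr := by
    have h0 : ((N*M).charpoly - Pr) * ((N*M).charpoly + Pr) = 0 := by
      linear_combination hsqq
    rcases mul_eq_zero.mp h0 with h | h
    · exact sub_eq_zero.mp h
    · exfalso
      have heq : (N*M).charpoly = -Pr := eq_neg_of_add_eq_zero_left h
      have hlc := congrArg Polynomial.leadingCoeff heq
      rw [hmon1.leadingCoeff, Polynomial.leadingCoeff_neg, hmonPr.leadingCoeff] at hlc
      norm_num at hlc
  -- final assembly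
  have hrect := pow_mul_charpoly_mul_comm M N
  have hcards : Fintype.card (V ⊕ V) = 2 * n := by
    rw [Fintype.card_sum, hn]; ring
  rw [hcards, hcardOLV, hNMP] at hrect
  rw [hS, ← hMN]
  have hXne : (X:ℝ[X]) ^ (2*n) ≠ 0 := pow_ne_zero _ Polynomial.X_ne_zero
  apply mul_left_cancel₀ hXne
  rw [hrect, show 2*m = 2*n + 2*(m-n) by omega, pow_add]
  ring
end

section
/- Let G be a connected d-regular graph with d ≥ 3, n vertices, m edges, and adjacency eigenvalues λ₁,...,λₙ. If B denotes the non-backtracking matrix of G, then the characteristic polynomial of B + Bᵗ equals (x²−4)^{m−n} · ∏_{i=1}^{n} ((x−λᵢ)² − (d−2)²). -/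
open Polynomial Matrix
open scoped Classical

namespace Stmt5Aux

variable {V : Type*} [Fintype V] [DecidableEq V] (G : SimpleGraph V)
variable (R : Type*) [CommRing R]

noncomputable section

def olRev (a : OLV G) : OLV G := ⟨(a.1.2, a.1.1), a.2.symm⟩

def matS : Matrix (OLV G) V R := Matrix.of fun a v => if a.1.1 = v then 1 else 0
def matT : Matrix (OLV G) V R := Matrix.of fun a v => if a.1.2 = v then 1 else 0
def matTau : Matrix (OLV G) (OLV G) R := Matrix.of fun a b => if b = olRev G a then 1 else 0

lemma olv_sum {α : Type*} [AddCommMonoid α] (f : V × V → α) :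
    ∑ a : OLV G, f a.1 = ∑ v : V, ∑ w ∈ G.neighborFinset v, f (v, w) := by
  rw [← Finset.sum_subtype (Finset.univ.filter fun p : V × V => G.Adj p.1 p.2)
    (fun p => by simp) f]
  rw [Finset.sum_filter, Fintype.sum_prod_type]
  refine Finset.sum_congr rfl fun v _ => ?_
  rw [SimpleGraph.neighborFinset_eq_filter, Finset.sum_filter]

variable {d : ℕ}

lemma hSS (hreg : G.IsRegularOfDegree d) : (matS G R)ᵀ * matS G R = (d : R) • 1 := by
  ext v w
  rw [Matrix.mul_apply]
  simp only [Matrix.transpose_apply, matS, Matrix.of_apply]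
  rw [olv_sum G (fun p => (if p.1 = v then (1:R) else 0) * (if p.1 = w then 1 else 0))]
  by_cases hvw : v = w
  · subst hvw
    simp only [Matrix.smul_apply, Matrix.one_apply_eq, smul_eq_mul, mul_one]
    rw [Finset.sum_eq_single v]
    · simp only [eq_self_iff_true, if_true, mul_one]
      rw [Finset.sum_const, nsmul_eq_mul, mul_one,
        SimpleGraph.card_neighborFinset_eq_degree, hreg v]
    · intro u _ hu; simp [hu]
    · simp
  · rw [Finset.sum_eq_zero]
    · simp [Matrix.one_apply_ne hvw, hvw]
    · intro u _
      by_cases h1 : u = v <;> by_cases h2 : u = w <;> simp_all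

lemma hTT (hreg : G.IsRegularOfDegree d) : (matT G R)ᵀ * matT G R = (d : R) • 1 := by
  ext v w
  rw [Matrix.mul_apply]
  simp only [Matrix.transpose_apply, matT, Matrix.of_apply]
  rw [olv_sum G (fun p => (if p.2 = v then (1:R) else 0) * (if p.2 = w then 1 else 0))]
  by_cases hvw : v = w
  · subst hvw
    have e1 : ∀ z : V, ((if z = v then (1:R) else 0) * (if z = v then 1 else 0))
        = if z = v then 1 else 0 := fun z => by by_cases h : z = v <;> simp [h]
    simp only [e1]
    have : ∀ u : V, (∑ z ∈ G.neighborFinset u, if z = v then (1:R) else 0)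
        = if u ∈ G.neighborFinset v then 1 else 0 := by
      intro u
      rw [Finset.sum_ite_eq' (G.neighborFinset u) v (fun _ => (1:R))]
      simp [SimpleGraph.mem_neighborFinset, G.adj_comm]
    simp only [this]
    rw [Finset.sum_ite_mem, Finset.univ_inter, Finset.sum_const, nsmul_eq_mul, mul_one,
      SimpleGraph.card_neighborFinset_eq_degree, hreg v]
    simp
  · rw [Finset.sum_eq_zero]
    · simp [Matrix.one_apply_ne hvw, hvw]
    · intro u _
      rw [Finset.sum_eq_zero]
      intro z _
      by_cases h1 : z = v <;> by_cases h2 : z = w <;> simp_all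

lemma hST : (matS G R)ᵀ * matT G R = G.adjMatrix R := by
  ext v w
  rw [Matrix.mul_apply]
  simp only [Matrix.transpose_apply, matS, matT, Matrix.of_apply]
  rw [olv_sum G (fun p => (if p.1 = v then (1:R) else 0) * (if p.2 = w then 1 else 0))]
  rw [Finset.sum_eq_single v]
  · simp only [eq_self_iff_true, if_true, one_mul]
    rw [Finset.sum_ite_eq' (G.neighborFinset v) w (fun _ => (1:R))]
    simp [SimpleGraph.mem_neighborFinset]
  · intro u _ hu
    rw [Finset.sum_eq_zero]; intro z _; simp [hu]
  · simp

lemma hTS : (matT G R)ᵀ * matS G R = G.adjMatrix R := by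
  ext v w
  rw [Matrix.mul_apply]
  simp only [Matrix.transpose_apply, matS, matT, Matrix.of_apply]
  rw [olv_sum G (fun p => (if p.2 = v then (1:R) else 0) * (if p.1 = w then 1 else 0))]
  rw [Finset.sum_eq_single w]
  · simp only [eq_self_iff_true, if_true, mul_one]
    rw [Finset.sum_ite_eq' (G.neighborFinset w) v (fun _ => (1:R))]
    simp [SimpleGraph.mem_neighborFinset, G.adj_comm]
  · intro u _ hu
    rw [Finset.sum_eq_zero]; intro z _; simp [hu]
  · simp

lemma hτS : matTau G R * matS G R = matT G R := by
  ext a v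
  rw [Matrix.mul_apply]
  simp only [matTau, matS, matT, Matrix.of_apply]
  rw [Finset.sum_eq_single (olRev G a)]
  · simp [olRev]; congr
  · intro b _ hb; simp [hb]
  · simp

lemma hτT : matTau G R * matT G R = matS G R := by
  ext a v
  rw [Matrix.mul_apply]
  simp only [matTau, matS, matT, Matrix.of_apply]
  rw [Finset.sum_eq_single (olRev G a)]
  · simp [olRev]; congr
  · intro b _ hb; simp [hb]
  · simp

lemma hττ : matTau G R * matTau G R = 1 := by
  ext a c
  rw [Matrix.mul_apply]
  rw [Finset.sum_eq_single (olRev G a)]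
  · have : olRev G (olRev G a) = a := by simp [olRev]
    simp [matTau, this, Matrix.one_apply, eq_comm]
  · intro b _ hb; simp [matTau, hb]
  · simp

lemma tau_symm : (matTau G R)ᵀ = matTau G R := by
  ext a b
  simp only [Matrix.transpose_apply, matTau, Matrix.of_apply]
  have : a = olRev G b ↔ b = olRev G a := by
    constructor <;> (rintro rfl; simp [olRev])
  simp [this]

lemma hC :
    (Matrix.of fun a b => if olArc G a b then (1:R) else 0) +
      (Matrix.of fun a b => if olArc G a b then (1:R) else 0)ᵀ =
    matT G R * (matS G R)ᵀ + matS G R * (matT G R)ᵀ - (2:R) • matTau G R := by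
  ext a b
  have hTS' : (matT G R * (matS G R)ᵀ) a b = if a.1.2 = b.1.1 then (1:R) else 0 := by
    rw [Matrix.mul_apply]
    rw [Finset.sum_eq_single a.1.2]
    · simp [matS, matT, eq_comm]
    · intro v _ hv; simp [matT, hv, Ne.symm hv]
    · simp
  have hST' : (matS G R * (matT G R)ᵀ) a b = if a.1.1 = b.1.2 then (1:R) else 0 := by
    rw [Matrix.mul_apply]
    rw [Finset.sum_eq_single a.1.1]
    · simp [matS, matT, eq_comm]
    · intro v _ hv; simp [matS, hv, Ne.symm hv]
    · simp
  have htau : (matTau G R) a b = if (a.1.2 = b.1.1 ∧ a.1.1 = b.1.2) then (1:R) else 0 := by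
    simp only [matTau, Matrix.of_apply, olRev]
    congr 1
    simp only [eq_iff_iff]
    constructor
    · rintro rfl; simp
    · rintro ⟨h1, h2⟩
      apply Subtype.ext
      exact Prod.ext h1.symm h2.symm
  simp only [Matrix.add_apply, Matrix.sub_apply, Matrix.transpose_apply, Matrix.of_apply,
    Matrix.smul_apply, hTS', hST', htau, olArc, smul_eq_mul]
  by_cases h1 : a.1.2 = b.1.1 <;> by_cases h2 : a.1.1 = b.1.2 <;>
    simp [h1, h2, eq_comm, ne_comm] <;> ring_nf <;> simp_all [eq_comm] <;> ring


open scoped Kronecker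

lemma olRev_olRev (a : OLV G) : olRev G (olRev G a) = a := by
  apply Subtype.ext; simp [olRev]

section Ordered
variable [LinearOrder V]

def olE := {p : V × V // G.Adj p.1 p.2 ∧ p.1 < p.2}

instance : Fintype (olE G) := by unfold olE; infer_instance

def olEquiv : OLV G ≃ olE G × Bool where
  toFun a := if h : a.1.1 < a.1.2 then (⟨a.1, a.2, h⟩, true)
    else (⟨(a.1.2, a.1.1), a.2.symm, lt_of_le_of_ne (not_lt.mp h) a.2.ne'⟩, false)
  invFun := fun pb => match pb with
    | (p, true) => ⟨p.1, p.2.1⟩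
    | (p, false) => olRev G ⟨p.1, p.2.1⟩
  left_inv a := by
    by_cases h : a.1.1 < a.1.2
    · simp [h]
    · simp only [h, dite_false]
      apply Subtype.ext
      simp [olRev]
  right_inv pb := by
    rcases pb with ⟨⟨⟨u, w⟩, hadj, huw⟩, b⟩
    cases b
    · simp [olRev, not_lt.mpr huw.le, asymm huw]
    · simp [huw]

lemma card_olE : 2 * Fintype.card (olE G) = 2 * G.edgeFinset.card := by
  have h1 : Fintype.card (OLV G) = Fintype.card (olE G) * 2 := by
    rw [Fintype.card_congr (olEquiv G)]; simp
  have h2 : Fintype.card (OLV G) = 2 * G.edgeFinset.card := by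
    rw [← SimpleGraph.sum_degrees_eq_twice_card_edges]
    calc Fintype.card (OLV G) = ∑ a : OLV G, (fun _ : V × V => 1) a.1 :=
          Fintype.card_eq_sum_ones
      _ = ∑ v : V, ∑ w ∈ G.neighborFinset v, (fun _ : V × V => 1) (v, w) := olv_sum G (fun _ : V × V => (1:ℕ))
      _ = ∑ v : V, G.degree v := by
          refine Finset.sum_congr rfl fun v _ => ?_
          rw [Finset.sum_const, smul_eq_mul, mul_one, SimpleGraph.card_neighborFinset_eq_degree]
  omega


lemma olE_ne_rev (p q : olE G) (h1 : (p.1 : V × V).1 = (q.1 : V × V).2)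
    (h2 : (p.1 : V × V).2 = (q.1 : V × V).1) : False := by
  have hp := p.2.2
  have hq := q.2.2
  rw [h1, h2] at hp
  exact lt_asymm hp hq

lemma det_one_smul_add_tau {K : Type*} [CommRing K] (x : K) :
    (x • (1 : Matrix (OLV G) (OLV G) K) + (2:K) • matTau G K).det
      = (x ^ 2 - 4) ^ (Fintype.card (olE G)) := by
  rw [← Matrix.det_reindex_self (olEquiv G)]
  have key : Matrix.reindex (olEquiv G) (olEquiv G)
        (x • (1 : Matrix (OLV G) (OLV G) K) + (2:K) • matTau G K)
      = (1 : Matrix (olE G) (olE G) K) ⊗ₖ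
          (Matrix.of fun b b' : Bool => if b = b' then x else (2 : K)) := by
    ext pb qb
    rcases pb with ⟨p, b⟩
    rcases qb with ⟨q, b'⟩
    have hinj : ∀ y z : OLV G, olRev G y = olRev G z → y = z := by
      intro y z h
      have := congrArg (olRev G) h
      rwa [olRev_olRev, olRev_olRev] at this
    set a : OLV G := ⟨p.1, p.2.1⟩ with ha
    set c : OLV G := ⟨q.1, q.2.1⟩ with hc
    have fac : (a = c) = (p = q) := by
      apply propext; constructor
      · intro h
        have h2 := congrArg Subtype.val h
        exact Subtype.ext h2
      · intro h; subst h; rfl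
    have fnr1 : ¬ (a = olRev G c) := by
      intro h
      exact olE_ne_rev G p q (congrArg (fun z : OLV G => (z.1 : V × V).1) h)
        (congrArg (fun z : OLV G => (z.1 : V × V).2) h)
    have fnr2 : ¬ (olRev G a = c) := fun h => fnr1 (by rw [← h, olRev_olRev])
    have g1 : (olRev G a = olRev G c) = (p = q) := by
      apply propext; constructor
      · intro h; rw [← fac]; exact hinj a c h
      · intro h; subst h; rfl
    have fac2 : (c = a) = (p = q) := by
      rw [show (c = a) = (a = c) from propext eq_comm, fac]
    have g1b : (olRev G c = olRev G a) = (p = q) := by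
      apply propext; constructor
      · intro h
        have hca : c = a := hinj c a h
        rw [← fac2]; exact hca
      · intro h
        have hac : a = c := by rw [fac]; exact h
        rw [hac]
    have g2 : (c = olRev G a) = False := eq_false fun h => fnr2 h.symm
    have g3 : (olRev G c = a) = False := eq_false fun h => fnr1 h.symm
    have g4 : (a = olRev G c) = False := eq_false fnr1
    have g5 : (olRev G a = c) = False := eq_false fnr2
    have g6 : (olRev G c = olRev G (olRev G a)) = False := by
      rw [olRev_olRev]; exact g3
    have g7 : (c = olRev G (olRev G a)) = (p = q) := by
      rw [olRev_olRev, ← fac]; apply propext; exact eq_comm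
    have es_true : (olEquiv G).symm (p, true) = a := rfl
    have es_false : (olEquiv G).symm (p, false) = olRev G a := rfl
    have es_true' : (olEquiv G).symm (q, true) = c := rfl
    have es_false' : (olEquiv G).symm (q, false) = olRev G c := rfl
    have tau_apply : ∀ y z : OLV G, matTau G K y z = if z = olRev G y then 1 else 0 :=
      fun y z => rfl
    simp only [Matrix.reindex_apply, Matrix.submatrix_apply, Matrix.add_apply,
      Matrix.smul_apply, Matrix.kroneckerMap_apply, Matrix.of_apply, smul_eq_mul]
    cases b <;> cases b' <;>
      simp only [es_true, es_false, es_true', es_false', tau_apply, Matrix.one_apply,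
        fac, fac2, g1, g1b, g2, g3, g4, g5, g6, g7] <;>
      by_cases hpq : p = q <;>
      simp [hpq, mul_comm]
  rw [key, Matrix.det_kronecker, Matrix.det_one, one_pow, one_mul]
  congr 1
  rw [← Matrix.det_submatrix_equiv_self finTwoEquiv]
  rw [Matrix.det_fin_two]
  simp only [Matrix.submatrix_apply, Matrix.of_apply]
  norm_num [finTwoEquiv]
  ring

end Ordered

section Generic
variable {R S : Type*} [CommRing R] [CommRing S]

lemma charpoly_eval' {ι : Type*} [Fintype ι] [DecidableEq ι]
    (M : Matrix ι ι R) (y : R) : (M.charpoly).eval y = (y • (1 : Matrix ι ι R) - M).det := by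
  rw [Matrix.charpoly, ← Polynomial.coe_evalRingHom, RingHom.map_det]
  congr 1
  ext i j
  by_cases h : i = j
  · subst h; simp [Matrix.charmatrix_apply_eq, Matrix.one_apply]
  · simp [Matrix.charmatrix_apply_ne _ _ _ h, Matrix.one_apply, h]

lemma det_fromBlocks_symm2 {ι : Type*} [Fintype ι] [DecidableEq ι]
    (P Q : Matrix ι ι R) :
    (Matrix.fromBlocks P Q Q P).det = (P + Q).det * (P - Q).det := by
  have h : Matrix.fromBlocks (1 : Matrix ι ι R) 1 0 1 * Matrix.fromBlocks P Q Q P *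
      Matrix.fromBlocks (1 : Matrix ι ι R) (-1) 0 1 =
      Matrix.fromBlocks (P + Q) 0 Q (P - Q) := by
    simp only [Matrix.fromBlocks_multiply, Matrix.mul_neg, Matrix.mul_one, Matrix.one_mul,
      Matrix.zero_mul, Matrix.mul_zero, add_zero, zero_add]
    congr 1 <;> abel
  have hd := congrArg Matrix.det h
  rw [Matrix.det_mul, Matrix.det_mul, Matrix.det_fromBlocks_zero₂₁,
    Matrix.det_fromBlocks_zero₂₁, Matrix.det_fromBlocks_zero₁₂] at hd
  simpa using hd

lemma psi_charpoly {ι : Type*} [Fintype ι] [DecidableEq ι]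
    (ψ : Polynomial R →+* S) (M : Matrix ι ι R) :
    ψ M.charpoly = (ψ Polynomial.X • (1 : Matrix ι ι S)
      - M.map (ψ.comp (Polynomial.C : R →+* Polynomial R))).det := by
  rw [Matrix.charpoly, RingHom.map_det]
  congr 1
  ext i j
  by_cases h : i = j
  · subst h
    simp [Matrix.charmatrix_apply_eq, Matrix.one_apply, Matrix.map_apply]
  · simp [Matrix.charmatrix_apply_ne _ _ _ h, Matrix.one_apply_ne h, Matrix.map_apply, h]

end Generic

section Main
variable [LinearOrder V] {F : Type*} [Field F]

set_option maxHeartbeats 1000000 in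
lemma det_main (x : F) (hx2 : x - 2 ≠ 0) (hx2' : x + 2 ≠ 0)
    (d n m : ℕ) (hreg : G.IsRegularOfDegree d) (hn : Fintype.card V = n)
    (hm : G.edgeFinset.card = m) (hmn : n ≤ m)
    (lam : Fin n → F)
    (hcharF : ∀ y : F, (y • (1 : Matrix V V F) - G.adjMatrix F).det = ∏ i, (y - lam i)) :
    (x • (1 : Matrix (OLV G) (OLV G) F)
        - ((Matrix.of fun a b => if olArc G a b then (1:F) else 0)
          + (Matrix.of fun a b => if olArc G a b then (1:F) else 0)ᵀ)).det
      = (x ^ 2 - 4) ^ (m - n) * ∏ i, ((x - lam i) ^ 2 - ((d:F) - 2) ^ 2) := by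
  classical
  have hx4 : x ^ 2 - 4 ≠ 0 := by
    have h := mul_ne_zero hx2 hx2'
    intro h0
    apply h
    rw [show ((x-2)*(x+2) : F) = x ^ 2 - 4 from by ring]
    exact h0
  have hcardolE : Fintype.card (olE G) = m := by
    have := card_olE G
    omega
  set A' : Matrix V V F := G.adjMatrix F with hA'
  set S' : Matrix (OLV G) V F := matS G F with hS'
  set T' : Matrix (OLV G) V F := matT G F with hT'
  set τ' : Matrix (OLV G) (OLV G) F := matTau G F with hτ'
  set U : Matrix (OLV G) (V ⊕ V) F := Matrix.fromCols T' S' with hU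
  set W : Matrix (V ⊕ V) (OLV G) F := Matrix.fromRows S'ᵀ T'ᵀ with hW
  set K1 : Matrix (OLV G) (OLV G) F := x • 1 + (2 : F) • τ' with hK1
  set K2 : Matrix (OLV G) (OLV G) F := ((x ^ 2 - 4)⁻¹ : F) • (x • 1 - (2 : F) • τ') with hK2
  have hmapC : ((Matrix.of fun a b => if olArc G a b then (1:F) else 0) +
      (Matrix.of fun a b => if olArc G a b then (1:F) else 0)ᵀ)
      = T' * S'ᵀ + S' * T'ᵀ - (2 : F) • τ' := by
    rw [hS', hT', hτ']
    exact hC G F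
  have hUW : U * W = T' * S'ᵀ + S' * T'ᵀ := by
    rw [hU, hW, Matrix.fromCols_mul_fromRows]
  have hK1K2 : K1 * K2 = 1 := by
    have hτ2 : τ' * τ' = 1 := hττ G F
    have t11 : (x • (1 : Matrix (OLV G) (OLV G) F)) * (x • (1 : Matrix (OLV G) (OLV G) F))
        = ((x*x : F)) • (1 : Matrix (OLV G) (OLV G) F) := by
      rw [Matrix.smul_mul, Matrix.mul_smul, smul_smul, Matrix.one_mul]
    have t12 : (x • (1 : Matrix (OLV G) (OLV G) F)) * ((2:F) • τ') = ((x*2 : F)) • τ' := by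
      rw [Matrix.smul_mul, Matrix.mul_smul, smul_smul, Matrix.one_mul]
    have t21 : ((2:F) • τ') * (x • (1 : Matrix (OLV G) (OLV G) F)) = ((2*x : F)) • τ' := by
      rw [Matrix.smul_mul, Matrix.mul_smul, smul_smul, Matrix.mul_one]
    have t22 : ((2:F) • τ') * ((2:F) • τ') = ((2*2 : F)) • (1 : Matrix (OLV G) (OLV G) F) := by
      rw [Matrix.smul_mul, Matrix.mul_smul, smul_smul, hτ2]
    have expand : (x • (1 : Matrix (OLV G) (OLV G) F) + (2:F) • τ') *
        (x • (1 : Matrix (OLV G) (OLV G) F) - (2:F) • τ') = (x ^ 2 - 4) • 1 := by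
      calc (x • (1 : Matrix (OLV G) (OLV G) F) + (2:F) • τ') *
          (x • (1 : Matrix (OLV G) (OLV G) F) - (2:F) • τ')
          = (x • (1 : Matrix (OLV G) (OLV G) F)) * (x • (1 : Matrix (OLV G) (OLV G) F))
              - (x • (1 : Matrix (OLV G) (OLV G) F)) * ((2:F) • τ')
              + (((2:F) • τ') * (x • (1 : Matrix (OLV G) (OLV G) F))
                - ((2:F) • τ') * ((2:F) • τ')) := by
            rw [Matrix.add_mul, Matrix.mul_sub, Matrix.mul_sub]
        _ = ((x*x : F)) • (1 : Matrix (OLV G) (OLV G) F) - ((2*x : F)) • τ'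
              + (((2*x : F)) • τ' - ((2*2 : F)) • (1 : Matrix (OLV G) (OLV G) F)) := by
            rw [t11, t12, t21, t22, mul_comm x 2]
        _ = ((x*x : F)) • (1 : Matrix (OLV G) (OLV G) F)
              - ((2*2 : F)) • (1 : Matrix (OLV G) (OLV G) F) := sub_add_sub_cancel _ _ _
        _ = (x ^ 2 - 4) • 1 := by
            rw [← sub_smul]
            congr 1
            ring
    rw [hK1, hK2, Matrix.mul_smul, expand, smul_smul, inv_mul_cancel₀ hx4, one_smul]
  rw [hmapC]
  have hsub : x • (1 : Matrix (OLV G) (OLV G) F)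
      - (T' * S'ᵀ + S' * T'ᵀ - (2 : F) • τ') = K1 - U * W := by
    rw [hUW, hK1]
    abel
  rw [hsub]
  have hfact : K1 - U * W = K1 * (1 - K2 * (U * W)) := by
    rw [Matrix.mul_sub, Matrix.mul_one, ← Matrix.mul_assoc, hK1K2, Matrix.one_mul]
  rw [hfact, Matrix.det_mul]
  have hswap : (1 - K2 * (U * W)).det = (1 - W * (K2 * U)).det := by
    rw [← Matrix.mul_assoc, Matrix.det_one_sub_mul_comm]
  rw [hswap]
  set c : F := (x ^ 2 - 4)⁻¹ with hc
  set P : Matrix V V F := 1 - c • (x • A' - (2:F) • ((d:F) • 1)) with hP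
  set Q : Matrix V V F := -(c • (x • ((d:F) • 1) - (2:F) • A')) with hQ
  have hWU : W * U = Matrix.fromBlocks A' ((d:F) • 1) ((d:F) • 1) A' := by
    rw [hW, hU, Matrix.fromRows_mul_fromCols, hST, hSS G F hreg, hTT G F hreg, hTS]
  have hτU : τ' * U = Matrix.fromCols S' T' := by
    rw [hτ', hU, Matrix.mul_fromCols, hτT, hτS]
  have hWτU : W * (τ' * U) = Matrix.fromBlocks ((d:F) • 1) A' A' ((d:F) • 1) := by
    rw [hτU, hW, Matrix.fromRows_mul_fromCols, hSS G F hreg, hST, hTS, hTT G F hreg]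
  have hblocks : (1 : Matrix (V ⊕ V) (V ⊕ V) F) - W * (K2 * U)
      = Matrix.fromBlocks P Q Q P := by
    have hK2U : W * (K2 * U) = c • (x • (W * U) - (2:F) • (W * (τ' * U))) := by
      rw [hK2, Matrix.smul_mul, Matrix.mul_smul, Matrix.sub_mul, Matrix.smul_mul,
        Matrix.smul_mul, Matrix.one_mul, Matrix.mul_sub, Matrix.mul_smul, Matrix.mul_smul,
        hc]
    rw [hK2U, hWU, hWτU, hP, hQ]
    ext ij kl
    rcases ij with i | i <;> rcases kl with j | j <;>
      simp only [Matrix.sub_apply, Matrix.smul_apply, Matrix.one_apply,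
        Matrix.fromBlocks_apply₁₁, Matrix.fromBlocks_apply₁₂, Matrix.fromBlocks_apply₂₁,
        Matrix.fromBlocks_apply₂₂, Matrix.neg_apply, Sum.inl.injEq, Sum.inr.injEq,
        smul_eq_mul, reduceCtorEq] <;>
      by_cases h : i = j <;> (try simp [h, Matrix.one_apply]) <;> (try ring)
  rw [hblocks, det_fromBlocks_symm2]
  have hPQ1 : P + Q = ((x + 2)⁻¹ : F) • ((x + 2 - (d:F)) • (1 : Matrix V V F) - A') := by
    rw [hP, hQ, hc]
    ext i j
    simp only [Matrix.add_apply, Matrix.sub_apply, Matrix.neg_apply, Matrix.smul_apply,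
      Matrix.one_apply, smul_eq_mul]
    by_cases h : i = j <;> simp only [h, if_pos rfl, if_true] <;>
      (try simp only [if_neg h]) <;> field_simp <;> ring
  have hPQ2 : P - Q = ((x - 2)⁻¹ : F) • ((x - 2 + (d:F)) • (1 : Matrix V V F) - A') := by
    rw [hP, hQ, hc]
    ext i j
    simp only [Matrix.sub_apply, Matrix.neg_apply, Matrix.smul_apply,
      Matrix.one_apply, smul_eq_mul]
    by_cases h : i = j <;> simp only [h, if_pos rfl, if_true] <;>
      (try simp only [if_neg h]) <;> field_simp <;> ring
  rw [hPQ1, hPQ2, Matrix.det_smul, Matrix.det_smul, hA', hcharF, hcharF, hn]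
  have hdetK1 : K1.det = (x ^ 2 - 4) ^ m := by
    rw [hK1, hτ', det_one_smul_add_tau, hcardolE]
  rw [hdetK1]
  have hcomb : (∏ i, (x + 2 - (d:F) - lam i)) * (∏ i, (x - 2 + (d:F) - lam i))
      = ∏ i, ((x - lam i) ^ 2 - ((d:F) - 2) ^ 2) := by
    rw [← Finset.prod_mul_distrib]
    exact Finset.prod_congr rfl fun i _ => by ring
  have hinv : (x + 2)⁻¹ * (x - 2)⁻¹ = (x ^ 2 - 4)⁻¹ := by
    rw [← mul_inv]
    congr 1
    ring
  have hpow : (x ^ 2 - 4) ^ m * ((x + 2)⁻¹) ^ n * ((x - 2)⁻¹) ^ n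
      = (x ^ 2 - 4) ^ (m - n) := by
    rw [mul_assoc, ← mul_pow, hinv, inv_pow, ← pow_sub₀ _ hx4 hmn]
  calc (x ^ 2 - 4) ^ m *
        (((x + 2)⁻¹) ^ n * (∏ i, (x + 2 - (d:F) - lam i)) *
          (((x - 2)⁻¹) ^ n * ∏ i, (x - 2 + (d:F) - lam i)))
      = ((x ^ 2 - 4) ^ m * ((x + 2)⁻¹) ^ n * ((x - 2)⁻¹) ^ n) *
        ((∏ i, (x + 2 - (d:F) - lam i)) * ∏ i, (x - 2 + (d:F) - lam i)) := by
        ring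
    _ = (x ^ 2 - 4) ^ (m - n) * ∏ i, ((x - lam i) ^ 2 - ((d:F) - 2) ^ 2) := by
        rw [hpow, hcomb]

end Main
end
end Stmt5Aux

local notation "K" => RatFunc ℝ

open Stmt5Aux in
set_option maxHeartbeats 1000000 in
set_option synthInstance.maxHeartbeats 1000000 in
theorem stmt_5 {V : Type*} [Fintype V] [DecidableEq V] (G : SimpleGraph V)
    (d n m : ℕ) (hd : 3 ≤ d) (hreg : G.IsRegularOfDegree d) (hconn : G.Connected)
    (hn : Fintype.card V = n) (hm : G.edgeFinset.card = m)
    (lam : Fin n → ℝ)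
    (hchar : (G.adjMatrix ℝ).charpoly = ∏ i, (X - C (lam i)))
    (B : Matrix (OLV G) (OLV G) ℝ)
    (hB : B = Matrix.of fun a b => if olArc G a b then (1 : ℝ) else 0) :
    (B + Bᵀ).charpoly =
      (X ^ 2 - 4) ^ (m - n) *
        ∏ i, ((X - C (lam i)) ^ 2 - C ((d : ℝ) - 2) ^ 2) := by
  classical
  letI : LinearOrder V := LinearOrder.lift' (Fintype.equivFin V) (Fintype.equivFin V).injective
  set ψ : Polynomial ℝ →+* K := (algebraMap (Polynomial ℝ) (RatFunc ℝ) : Polynomial ℝ →+* K)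
    with hψ
  have hinj : Function.Injective ψ := RatFunc.algebraMap_injective ℝ
  apply hinj
  set φ : ℝ →+* K := ψ.comp (Polynomial.C : ℝ →+* Polynomial ℝ) with hφ
  set x : K := ψ Polynomial.X with hx
  have keyne : ∀ p : Polynomial ℝ, p ≠ 0 → ψ p ≠ 0 := by
    intro p hp h
    exact hp (hinj (by rw [h, map_zero]))
  have hx2 : x - 2 ≠ 0 := by
    have h1 : (X - 2 : Polynomial ℝ) ≠ 0 := by
      intro h; have := congrArg (Polynomial.eval 0) h; norm_num at this
    have := keyne _ h1
    rwa [map_sub, map_ofNat] at this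
  have hx2' : x + 2 ≠ 0 := by
    have h1 : (X + 2 : Polynomial ℝ) ≠ 0 := by
      intro h; have := congrArg (Polynomial.eval 0) h; norm_num at this
    have := keyne _ h1
    rwa [map_add, map_ofNat] at this
  have hsum : n * d = 2 * m := by
    rw [← hm, ← SimpleGraph.sum_degrees_eq_twice_card_edges, ← hn]
    have hdeg : ∑ v : V, G.degree v = ∑ _v : V, d := Finset.sum_congr rfl fun v _ => hreg v
    rw [hdeg, Finset.sum_const, smul_eq_mul, Finset.card_univ, mul_comm]
  have hmn : n ≤ m := by
    have h3 : n * 3 ≤ n * d := Nat.mul_le_mul_left n hd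
    omega
  -- eigenvalue evaluation over K
  have hadjmap : (G.adjMatrix ℝ).map (φ : ℝ → K) = G.adjMatrix K := by
    ext i j
    by_cases h : G.Adj i j <;> simp [Matrix.map_apply, h]
  have evalA : ∀ y : K, (y • (1 : Matrix V V K) - G.adjMatrix K).det
      = ∏ i, (y - φ (lam i)) := by
    intro y
    rw [← charpoly_eval']
    have hcp : (G.adjMatrix K).charpoly = ((G.adjMatrix ℝ).charpoly).map (φ : ℝ →+* K) := by
      rw [← hadjmap, Matrix.charpoly_map]
    rw [hcp, hchar, Polynomial.map_prod]
    simp [Polynomial.eval_prod]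
  -- rewrite LHS
  rw [psi_charpoly ψ (B + Bᵀ), ← hx, ← hφ]
  have hmap : (B + Bᵀ).map (φ : ℝ → K)
      = ((Matrix.of fun a b => if olArc G a b then (1:K) else 0) +
        (Matrix.of fun a b => if olArc G a b then (1:K) else 0)ᵀ) := by
    rw [hB]
    ext a b
    simp only [Matrix.map_apply, Matrix.add_apply, Matrix.transpose_apply, Matrix.of_apply]
    by_cases h1 : olArc G a b <;> by_cases h2 : olArc G b a <;> simp [h1, h2]
  rw [hmap]
  rw [det_main G x hx2 hx2' d n m hreg hn hm hmn (fun i => φ (lam i)) evalA]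
  -- rewrite RHS
  have hψC : ∀ r : ℝ, ψ (C r) = φ r := fun r => rfl
  have hφd : φ ((d:ℝ) - 2) = (d:K) - 2 := by
    rw [map_sub, map_natCast, map_ofNat]
  rw [_root_.map_mul, map_pow, map_prod]
  congr 1
  · rw [map_sub, map_pow, map_ofNat, ← hx]
  · refine Finset.prod_congr rfl fun i _ => ?_
    rw [map_sub, map_pow, map_pow, map_sub]
    simp only [hψC]
    rw [hφd, ← hx]
end

section
/- Let G be a connected d-regular graph with d ≥ 3. The map ψ sending each vertex (u,v) of L*(G) to the edge uv of L(G) is a locally bijective homomorphism from L*(G) to L(G); i.e., L*(G) is a 2-lift (double cover) of the line graph L(G). -/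
open Polynomial Matrix
open scoped Classical

lemma lstar_adj_iff {V : Type*} {G : SimpleGraph V} {a b : OLV G} :
    (Lstar G).Adj a b ↔ a ≠ b ∧
      ((a.1.2 = b.1.1 ∧ a.1.1 ≠ b.1.2) ∨ (b.1.2 = a.1.1 ∧ b.1.1 ≠ a.1.2)) := by
  simp [Lstar, olArc, SimpleGraph.fromRel_adj]

theorem stmt_13 {V : Type*} [Fintype V] [DecidableEq V] (G : SimpleGraph V)
    (d : ℕ) (hd : 3 ≤ d) (hreg : G.IsRegularOfDegree d) (hconn : G.Connected)
    (ψ : OLV G → G.edgeSet)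
    (hψ : ∀ a : OLV G, (ψ a : Sym2 V) = s(a.1.1, a.1.2)) :
    (∀ a b, (Lstar G).Adj a b → (G.lineGraph).Adj (ψ a) (ψ b)) ∧
      (∀ a : OLV G,
        Set.BijOn ψ ((Lstar G).neighborSet a) ((G.lineGraph).neighborSet (ψ a))) ∧
      ∀ e : G.edgeSet, (ψ ⁻¹' {e}).ncard = 2 := by
  have hom : ∀ a b, (Lstar G).Adj a b → (G.lineGraph).Adj (ψ a) (ψ b) := by
    intro a b hab
    rw [lstar_adj_iff] at hab
    obtain ⟨hne, harc⟩ := hab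
    rw [SimpleGraph.lineGraph_adj_iff_exists]
    constructor
    · intro h
      have h2 : (ψ a : Sym2 V) = (ψ b : Sym2 V) := congrArg _ h
      rw [hψ a, hψ b, Sym2.eq_iff] at h2
      rcases h2 with ⟨e1, e2⟩ | ⟨e1, e2⟩
      · exact hne (Subtype.ext (Prod.ext e1 e2))
      · rcases harc with ⟨_, h2'⟩ | ⟨_, h2'⟩
        · exact h2' e1
        · exact h2' e2.symm
    · rcases harc with ⟨h1, _⟩ | ⟨h1, _⟩
      · exact ⟨a.1.2, by rw [hψ a]; exact Sym2.mem_mk_right _ _,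
          by rw [hψ b, h1]; exact Sym2.mem_mk_left _ _⟩
      · exact ⟨a.1.1, by rw [hψ a]; exact Sym2.mem_mk_left _ _,
          by rw [hψ b, ← h1]; exact Sym2.mem_mk_right _ _⟩
  refine ⟨hom, fun a => ⟨fun b hb => hom a b hb, ?_, ?_⟩, ?_⟩
  · -- injective on neighborhood
    intro b hb c hc hbc
    have hb' := (lstar_adj_iff.mp hb).2
    have hc' := (lstar_adj_iff.mp hc).2
    have h2 : (ψ b : Sym2 V) = (ψ c : Sym2 V) := congrArg _ hbc
    rw [hψ b, hψ c, Sym2.eq_iff] at h2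
    rcases h2 with ⟨e1, e2⟩ | ⟨e1, e2⟩
    · exact Subtype.ext (Prod.ext e1 e2)
    · exfalso
      rcases hb' with ⟨h1, h2'⟩ | ⟨h1, h2'⟩ <;> rcases hc' with ⟨k1, k2⟩ | ⟨k1, k2⟩
      · exact G.ne_of_adj c.2 (k1.symm.trans (h1.trans e1))
      · exact G.ne_of_adj a.2 (h1.trans (e1.trans k1)).symm
      · exact G.ne_of_adj a.2 (h1.symm.trans (e2.trans k1.symm))
      · exact G.ne_of_adj c.2 (e2.symm.trans (h1.trans k1.symm))
  · -- surjective onto neighborhood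
    intro f hf
    rw [SimpleGraph.mem_neighborSet, SimpleGraph.lineGraph_adj_iff_exists] at hf
    obtain ⟨hne, x, hx1, hx2⟩ := hf
    rw [hψ a] at hx1
    obtain ⟨f, hfE⟩ := f
    rw [Sym2.mem_iff] at hx1
    -- f contains x; x = a.1.1 or x = a.1.2
    obtain ⟨y, rfl⟩ := (Sym2.mem_iff_exists).mp hx2
    have hadjxy : G.Adj x y := G.mem_edgeSet.mp hfE
    have ha := a.2
    rcases hx1 with rfl | rfl
    · -- x = a.1.1 : use b = (y, a.1.1)
      refine ⟨⟨(y, a.1.1), hadjxy.symm⟩, ?_, ?_⟩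
      · rw [SimpleGraph.mem_neighborSet, lstar_adj_iff]
        refine ⟨?_, Or.inr ⟨rfl, ?_⟩⟩
        · intro h
          have h2 : a.1.2 = a.1.1 := congrArg (fun z : OLV G => z.1.2) h
          exact G.ne_of_adj ha h2.symm
        · intro h
          have h' : y = a.1.2 := h
          apply hne
          apply Subtype.ext
          rw [hψ a, ← h']
      · apply Subtype.ext
        rw [hψ]
        exact (Sym2.eq_swap)
    · -- x = a.1.2 : use b = (a.1.2, y)
      refine ⟨⟨(a.1.2, y), hadjxy⟩, ?_, ?_⟩
      · rw [SimpleGraph.mem_neighborSet, lstar_adj_iff]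
        refine ⟨?_, Or.inl ⟨rfl, ?_⟩⟩
        · intro h
          have h1 : a.1.2 = a.1.1 := congrArg (fun z : OLV G => z.1.1) h.symm
          exact G.ne_of_adj ha h1.symm
        · intro h
          have h' : a.1.1 = y := h
          apply hne
          apply Subtype.ext
          rw [hψ a, h', Sym2.eq_swap]
      · apply Subtype.ext
        rw [hψ]
  · intro e
    obtain ⟨e, he⟩ := e
    revert he
    refine Sym2.ind (fun x y he => ?_) e
    have hadj : G.Adj x y := G.mem_edgeSet.mp he
    have hset : ψ ⁻¹' {(⟨s(x,y), he⟩ : G.edgeSet)} =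
        {(⟨(x, y), hadj⟩ : OLV G), ⟨(y, x), hadj.symm⟩} := by
      ext b
      simp only [Set.mem_preimage, Set.mem_singleton_iff, Set.mem_insert_iff]
      constructor
      · intro hb
        have h2 : (ψ b : Sym2 V) = s(x, y) := congrArg _ hb
        rw [hψ b, Sym2.eq_iff] at h2
        rcases h2 with ⟨e1, e2⟩ | ⟨e1, e2⟩
        · exact Or.inl (Subtype.ext (Prod.ext e1 e2))
        · exact Or.inr (Subtype.ext (Prod.ext e1 e2))
      · rintro (rfl | rfl) <;> (apply Subtype.ext; rw [hψ]) <;> simp [Sym2.eq_swap]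
    rw [hset]
    rw [Set.ncard_pair]
    intro h
    have := congrArg (fun z => z.1.1) h
    simp only at this
    exact G.ne_of_adj hadj this
end

section
/- Let J be a graph and H a 2-lift of J arising from a signing s : E(J) → {+1,−1}. Then the characteristic polynomial of the adjacency matrix of H equals the product of the characteristic polynomial of the adjacency matrix of J and the characteristic polynomial of the signed adjacency matrix A_s of (J,s). -/
open Polynomial Matrix
open scoped Classical

/-- The 2-lift of `J` associated with a signing `s` of its edges: edges with sign `+1`
lift to two parallel copies, edges with sign `-1` lift to two crossing copies. -/
def TwoLift {V : Type*} (J : SimpleGraph V) (s : V → V → ℤ) :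
    SimpleGraph (V × Bool) :=
  SimpleGraph.fromRel fun a b =>
    J.Adj a.1 b.1 ∧ ((s a.1 b.1 = 1 ∧ a.2 = b.2) ∨ (s a.1 b.1 = -1 ∧ a.2 ≠ b.2))

/-- Characteristic polynomials of similar matrices (witnessed by an intertwining
matrix with nonzero determinant) agree, over a field. -/
lemma charpoly_eq_of_intertwine {n : Type*} [Fintype n] [DecidableEq n]
    (M D P : Matrix n n ℝ) (hP : P.det ≠ 0) (h : M * P = P * D) :
    M.charpoly = D.charpoly := by
  have hmap : (charmatrix M) * P.map C = P.map C * charmatrix D := by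
    have h1 : (M.map (C : ℝ →+* ℝ[X])) * P.map C = P.map C * D.map C := by
      rw [← Matrix.map_mul, h, Matrix.map_mul]
    have h2 : (Matrix.scalar n (X : ℝ[X])) * P.map C = P.map C * Matrix.scalar n X :=
      Matrix.scalar_commute (X : ℝ[X]) (fun r' => Commute.all _ _) (P.map C)
    simp only [charmatrix, sub_mul, mul_sub, RingHom.mapMatrix_apply, h1, h2]
  have hdet := congrArg Matrix.det hmap
  rw [Matrix.det_mul, Matrix.det_mul] at hdet
  have hPc : (P.map (C : ℝ →+* ℝ[X])).det ≠ 0 := by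
    rw [← RingHom.mapMatrix_apply, ← RingHom.map_det]
    simpa using hP
  have := hdet
  rw [mul_comm ((P.map (C : ℝ →+* ℝ[X])).det)] at this
  exact mul_right_cancel₀ hPc this

theorem stmt_14 {V : Type*} [Fintype V] [DecidableEq V] (J : SimpleGraph V)
    (s : V → V → ℤ) (hsymm : ∀ u v, s u v = s v u)
    (hsval : ∀ u v, J.Adj u v → s u v = 1 ∨ s u v = -1) :
    ((TwoLift J s).adjMatrix ℝ).charpoly =
      (J.adjMatrix ℝ).charpoly *
        (Matrix.of fun u v => if J.Adj u v then (s u v : ℝ) else 0).charpoly := by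
  -- adjacency of the lift
  have hadj : ∀ a b : V × Bool, (TwoLift J s).Adj a b ↔
      J.Adj a.1 b.1 ∧ ((s a.1 b.1 = 1 ∧ a.2 = b.2) ∨ (s a.1 b.1 = -1 ∧ a.2 ≠ b.2)) := by
    intro a b
    rw [TwoLift, SimpleGraph.fromRel_adj]
    constructor
    · rintro ⟨hne, h | h⟩
      · exact h
      · refine ⟨h.1.symm, ?_⟩
        rcases h.2 with ⟨h1, h2⟩ | ⟨h1, h2⟩
        · exact Or.inl ⟨(hsymm a.1 b.1).trans h1, h2.symm⟩
        · exact Or.inr ⟨(hsymm a.1 b.1).trans h1, fun hc => h2 hc.symm⟩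
    · rintro ⟨hJ, h⟩
      refine ⟨fun hc => J.ne_of_adj hJ (congrArg Prod.fst hc), Or.inl ⟨hJ, h⟩⟩
  set A1 : Matrix V V ℝ := Matrix.of fun u v => if J.Adj u v ∧ s u v = 1 then (1 : ℝ) else 0
    with hA1
  set A2 : Matrix V V ℝ := Matrix.of fun u v => if J.Adj u v ∧ s u v = -1 then (1 : ℝ) else 0
    with hA2
  have hA : J.adjMatrix ℝ = A1 + A2 := by
    ext u v
    by_cases h : J.Adj u v
    · rcases hsval u v h with h1 | h1 <;>
        simp [hA1, hA2, h, h1] <;> omega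
    · simp [hA1, hA2, h]
  have hAs : (Matrix.of fun u v => if J.Adj u v then (s u v : ℝ) else 0) = A1 - A2 := by
    ext u v
    by_cases h : J.Adj u v
    · rcases hsval u v h with h1 | h1 <;> simp [hA1, hA2, h, h1] <;> omega
    · simp [hA1, hA2, h]
  -- reindex
  let e : V × Bool ≃ V ⊕ V := (Equiv.prodComm V Bool).trans (Equiv.boolProdEquivSum V)
  have hM : (Matrix.reindex e e ((TwoLift J s).adjMatrix ℝ)) = fromBlocks A1 A2 A2 A1 := by
    ext i j
    cases i <;> cases j <;>
      simp [e, Matrix.reindex_apply, hadj, hA1, hA2, fromBlocks]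
  -- conjugation
  set P : Matrix (V ⊕ V) (V ⊕ V) ℝ := fromBlocks 1 1 1 (-1) with hPdef
  have hPP : P * P = (2 : ℝ) • (1 : Matrix (V ⊕ V) (V ⊕ V) ℝ) := by
    rw [hPdef, fromBlocks_multiply]
    simp only [Matrix.one_mul, Matrix.mul_one, Matrix.mul_neg, Matrix.neg_mul, neg_neg,
      add_neg_cancel, Matrix.smul_apply]
    rw [← fromBlocks_one, fromBlocks_smul]
    congr 1 <;> simp [two_smul]
  have hPdet : P.det ≠ 0 := by
    intro h
    have := congrArg Matrix.det hPP
    rw [Matrix.det_mul, h, Matrix.det_smul, Matrix.det_one, mul_zero] at this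
    rw [mul_one] at this
    exact (pow_ne_zero _ (two_ne_zero)) this.symm
  have hkey : (fromBlocks A1 A2 A2 A1) * P = P * fromBlocks (A1 + A2) 0 0 (A1 - A2) := by
    rw [hPdef, fromBlocks_multiply, fromBlocks_multiply]
    simp only [mul_one, one_mul, Matrix.mul_neg, Matrix.neg_mul, Matrix.mul_zero,
      Matrix.zero_mul, neg_zero, add_zero, zero_add]
    congr 1 <;> abel
  calc ((TwoLift J s).adjMatrix ℝ).charpoly
      = (Matrix.reindex e e ((TwoLift J s).adjMatrix ℝ)).charpoly :=
        (Matrix.charpoly_reindex e _).symm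
    _ = (fromBlocks A1 A2 A2 A1).charpoly := by rw [hM]
    _ = (fromBlocks (A1 + A2) 0 0 (A1 - A2)).charpoly :=
        charpoly_eq_of_intertwine _ _ P hPdet hkey
    _ = (A1 + A2).charpoly * (A1 - A2).charpoly := Matrix.charpoly_fromBlocks_zero₂₁ _ _ _
    _ = _ := by rw [hA, hAs]
end

section
/- Let G be a connected d-regular graph (d ≥ 3) with n vertices, m edges and adjacency eigenvalues λ₁,...,λₙ. Let s be the signing of the line graph L(G) induced by viewing L*(G) as a 2-lift of L(G). Then the characteristic polynomial of the signed adjacency matrix of (L(G), s) equals (x−2)^{m−n} · ∏_{i=1}^{n} (x − λᵢ + d − 2). -/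
open Polynomial Matrix
open scoped Classical

section Comb
variable {V : Type*} [Fintype V] [DecidableEq V] (G : SimpleGraph V)

set_option linter.unusedSectionVars false

noncomputable def arcOf (e : G.edgeSet) {u : V} (h : u ∈ (e : Sym2 V)) : OLV G :=
  ⟨(u, Sym2.Mem.other h), by
    have h2 := Sym2.other_spec h
    have h3 := e.2
    rw [← h2] at h3
    exact h3⟩

@[simp] lemma arcOf_fst (e : G.edgeSet) {u : V} (h : u ∈ (e : Sym2 V)) :
    (arcOf G e h).1.1 = u := rfl

lemma arcOf_snd {e : G.edgeSet} {u w : V} (h : u ∈ (e : Sym2 V))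
    (hw : (e : Sym2 V) = s(u, w)) : (arcOf G e h).1.2 = w := by
  exact Sym2.congr_right.mp ((Sym2.other_spec h).trans hw)

lemma psi_arcOf (ψ : OLV G → G.edgeSet)
    (hψ : ∀ a : OLV G, (ψ a : Sym2 V) = s(a.1.1, a.1.2))
    (e : G.edgeSet) {u : V} (h : u ∈ (e : Sym2 V)) : ψ (arcOf G e h) = e := by
  apply Subtype.ext
  rw [hψ]
  exact Sym2.other_spec h

noncomputable def Nmat (ε : OLV G → Bool) : Matrix V (G.edgeSet) ℝ :=
  Matrix.of fun u e =>
    if h : u ∈ (e : Sym2 V) then (if ε (arcOf G e h) then 1 else -1) else 0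

variable (ψ : OLV G → G.edgeSet)
    (hψ : ∀ a : OLV G, (ψ a : Sym2 V) = s(a.1.1, a.1.2))
    (ε : OLV G → Bool)
    (hε : ∀ a b : OLV G, ψ a = ψ b → a ≠ b → ε a ≠ ε b)

include hψ hε in
lemma Nmat_opp {e : G.edgeSet} {u w : V} (hu : u ∈ (e : Sym2 V)) (hw : w ∈ (e : Sym2 V))
    (huw : u ≠ w) : Nmat G ε u e * Nmat G ε w e = -1 := by
  have hpsi : ψ (arcOf G e hu) = ψ (arcOf G e hw) := by
    rw [psi_arcOf G ψ hψ, psi_arcOf G ψ hψ]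
  have hne : arcOf G e hu ≠ arcOf G e hw := by
    intro hcon
    exact huw (by rw [← arcOf_fst G e hu, hcon, arcOf_fst])
  have := hε _ _ hpsi hne
  simp only [Nmat, Matrix.of_apply, dif_pos hu, dif_pos hw]
  cases hcu : ε (arcOf G e hu) <;> cases hcw : ε (arcOf G e hw) <;>
    simp_all

lemma Nmat_mul_self (u : V) (e : G.edgeSet) :
    Nmat G ε u e * Nmat G ε u e = if u ∈ (e : Sym2 V) then 1 else 0 := by
  by_cases h : u ∈ (e : Sym2 V)
  · simp only [Nmat, Matrix.of_apply, dif_pos h, if_pos h]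
    cases ε (arcOf G e h) <;> norm_num
  · simp [Nmat, dif_neg h, h]

lemma Nmat_sum_sq (e : G.edgeSet) : ∑ x, Nmat G ε x e * Nmat G ε x e = 2 := by
  simp only [Nmat_mul_self]
  obtain ⟨ev, he⟩ := e
  induction ev using Sym2.ind with
  | _ p q =>
    have hpq : p ≠ q := G.ne_of_adj (G.mem_edgeSet.mp he)
    rw [← Finset.sum_subset (Finset.subset_univ ({p, q} : Finset V)) (by
      intro x _ hx
      simp only [Finset.mem_insert, Finset.mem_singleton, not_or] at hx
      simp [Sym2.mem_iff, hx.1, hx.2])]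
    rw [Finset.sum_pair hpq]
    simp [Sym2.mem_iff]
    norm_num

include hψ hε in
lemma Nmat_sum_offdiag {e f : G.edgeSet}
    (sgn : G.edgeSet → G.edgeSet → ℤ)
    (hsgn : ∀ a b : OLV G, (Lstar G).Adj a b →
      sgn (ψ a) (ψ b) = if ε a = ε b then 1 else -1)
    (hef : e ≠ f) :
    ∑ x, Nmat G ε x e * Nmat G ε x f =
      if (G.lineGraph).Adj e f then -(sgn e f : ℝ) else 0 := by
  have huniq : ∀ x v : V, x ∈ (e : Sym2 V) → x ∈ (f : Sym2 V) →
      v ∈ (e : Sym2 V) → v ∈ (f : Sym2 V) → x = v := by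
    intro x v hxe hxf hve hvf
    by_contra hxv
    exact hef (Subtype.ext (((Sym2.mem_and_mem_iff hxv).mp ⟨hxe, hve⟩).trans
      ((Sym2.mem_and_mem_iff hxv).mp ⟨hxf, hvf⟩).symm))
  by_cases hadj : (G.lineGraph).Adj e f
  · obtain ⟨-, v, hve, hvf⟩ := SimpleGraph.lineGraph_adj_iff_exists.mp hadj
    rw [if_pos hadj]
    rw [Finset.sum_eq_single v]
    · -- main term
      have hvu' : G.Adj v (Sym2.Mem.other hve) := (arcOf G e hve).2
      set u' := Sym2.Mem.other hve with hu'def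
      set a : OLV G := ⟨(u', v), hvu'.symm⟩ with ha
      set ae := arcOf G e hve with hae
      set bf := arcOf G f hvf with hbf
      have hu'v : u' ≠ v := G.ne_of_adj hvu'.symm
      have heu' : (e : Sym2 V) = s(v, u') := (Sym2.other_spec hve).symm
      have hfw' : (f : Sym2 V) = s(v, Sym2.Mem.other hvf) := (Sym2.other_spec hvf).symm
      have hu'w' : u' ≠ Sym2.Mem.other hvf := by
        intro hc
        exact hef (Subtype.ext (heu'.trans (by rw [hc, ← hfw'])))
      have hLadj : (Lstar G).Adj a bf := by
        rw [Lstar, SimpleGraph.fromRel_adj]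
        refine ⟨?_, Or.inl ⟨rfl, hu'w'⟩⟩
        intro hc
        exact hu'v (congrArg (fun z : OLV G => z.1.1) hc)
      have hψa : ψ a = e := by
        apply Subtype.ext
        rw [hψ]
        show s(u', v) = (e : Sym2 V)
        rw [Sym2.eq_swap]
        exact Sym2.other_spec hve
      have hψb : ψ bf = f := psi_arcOf G ψ hψ f hvf
      have hs := hsgn a bf hLadj
      rw [hψa, hψb] at hs
      have hεa : ε a ≠ ε ae := by
        apply hε
        · rw [hψa, hae, psi_arcOf G ψ hψ]
        · intro hc
          exact hu'v (congrArg (fun z : OLV G => z.1.1) hc)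
      have hNe : Nmat G ε v e = if ε ae then 1 else -1 := by
        simp only [Nmat, Matrix.of_apply, dif_pos hve, hae]
      have hNf : Nmat G ε v f = if ε bf then 1 else -1 := by
        simp only [Nmat, Matrix.of_apply, dif_pos hvf, hbf]
      rw [hNe, hNf, hs]
      cases hA : ε a <;> cases hAe : ε ae <;> cases hB : ε bf <;>
          rw [hA, hAe] at hεa <;>
        first
          | exact absurd rfl hεa
          | norm_num [hA, hAe, hB]
    · intro x _ hx
      by_cases hxe : x ∈ (e : Sym2 V)
      · by_cases hxf : x ∈ (f : Sym2 V)
        · exact absurd (huniq x v hxe hxf hve hvf) hx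
        · simp [Nmat, dif_neg hxf]
      · simp [Nmat, dif_neg hxe]
    · intro hv; exact absurd (Finset.mem_univ v) hv
  · rw [if_neg hadj]
    apply Finset.sum_eq_zero
    intro x _
    by_cases hxe : x ∈ (e : Sym2 V)
    · by_cases hxf : x ∈ (f : Sym2 V)
      · exact absurd (SimpleGraph.lineGraph_adj_iff_exists.mpr ⟨hef, x, hxe, hxf⟩) hadj
      · simp [Nmat, dif_neg hxf]
    · simp [Nmat, dif_neg hxe]

include hψ hε in
lemma Nmat_NNT (d : ℕ) (hreg : G.IsRegularOfDegree d) :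
    Nmat G ε * (Nmat G ε)ᵀ = (d : ℝ) • (1 : Matrix V V ℝ) - G.adjMatrix ℝ := by
  ext u w
  rw [Matrix.mul_apply]
  simp only [Matrix.transpose_apply]
  by_cases huw : u = w
  · subst huw
    simp only [Nmat_mul_self]
    rw [← Finset.sum_subtype G.edgeFinset (fun x => SimpleGraph.mem_edgeFinset)
      (fun x => if u ∈ x then (1 : ℝ) else 0)]
    rw [Finset.sum_boole]
    rw [← SimpleGraph.incidenceFinset_eq_filter, SimpleGraph.card_incidenceFinset_eq_degree,
      hreg u]
    simp [Matrix.one_apply, Matrix.smul_apply]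
  · have hrhs : ((d : ℝ) • (1 : Matrix V V ℝ) - G.adjMatrix ℝ) u w =
        -(if G.Adj u w then (1 : ℝ) else 0) := by
      simp [Matrix.one_apply_ne huw, huw]
    rw [hrhs]
    by_cases hadj : G.Adj u w
    · rw [Finset.sum_eq_single (⟨s(u, w), hadj⟩ : G.edgeSet)]
      · rw [Nmat_opp G ψ hψ ε hε (by simp) (by simp) huw]
        simp [hadj]
      · intro e _ he
        by_cases hue : u ∈ (e : Sym2 V)
        · by_cases hwe : w ∈ (e : Sym2 V)
          · exact absurd (Subtype.ext ((Sym2.mem_and_mem_iff huw).mp ⟨hue, hwe⟩)) he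
          · simp [Nmat, dif_neg hwe]
        · simp [Nmat, dif_neg hue]
      · intro h; exact absurd (Finset.mem_univ _) h
    · rw [Finset.sum_eq_zero, if_neg hadj, neg_zero]
      intro e _
      by_cases hue : u ∈ (e : Sym2 V)
      · by_cases hwe : w ∈ (e : Sym2 V)
        · have : (e : Sym2 V) = s(u, w) := (Sym2.mem_and_mem_iff huw).mp ⟨hue, hwe⟩
          have he2 := e.2
          rw [this] at he2
          exact absurd (G.mem_edgeSet.mp he2) hadj
        · simp [Nmat, dif_neg hwe]
      · simp [Nmat, dif_neg hue]

include hψ hε in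
lemma Bmat_eq (sgn : G.edgeSet → G.edgeSet → ℤ)
    (hsgn : ∀ a b : OLV G, (Lstar G).Adj a b →
      sgn (ψ a) (ψ b) = if ε a = ε b then 1 else -1) :
    (Matrix.of fun e f : G.edgeSet => if (G.lineGraph).Adj e f then (sgn e f : ℝ) else 0) =
      (2 : ℝ) • (1 : Matrix G.edgeSet G.edgeSet ℝ) - (Nmat G ε)ᵀ * Nmat G ε := by
  ext e f
  rw [Matrix.sub_apply, Matrix.mul_apply]
  simp only [Matrix.transpose_apply, Matrix.of_apply, Matrix.smul_apply]
  by_cases hef : e = f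
  · subst hef
    rw [if_neg (G.lineGraph.irrefl), Nmat_sum_sq]
    simp [Matrix.one_apply]
  · rw [Nmat_sum_offdiag G ψ hψ ε hε sgn hsgn hef]
    rw [Matrix.one_apply_ne hef]
    by_cases hadj : (G.lineGraph).Adj e f <;> simp [hadj]

end Comb

noncomputable def pdet {α : Type*} [Fintype α] [DecidableEq α]
    (p : ℝ[X]) (M : Matrix α α ℝ) : ℝ[X] :=
  det (p • (1 : Matrix α α ℝ[X]) + M.map Polynomial.C)

lemma charpoly_eq_pdet {α : Type*} [Fintype α] [DecidableEq α] (M : Matrix α α ℝ) :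
    M.charpoly = pdet X (-M) := by
  unfold pdet Matrix.charpoly Matrix.charmatrix
  congr 1
  ext i j
  by_cases h : i = j <;>
    simp [h, Matrix.scalar_apply, Matrix.one_apply, Matrix.diagonal_apply, sub_eq_add_neg]

lemma pdet_aeval {α : Type*} [Fintype α] [DecidableEq α]
    (f : ℝ[X] →ₐ[ℝ] ℝ[X]) (p : ℝ[X]) (M : Matrix α α ℝ) :
    f (pdet p M) = pdet (f p) M := by
  unfold pdet
  have hC : ∀ r : ℝ, f (C r) = C r := fun r => by
    rw [← Polynomial.algebraMap_eq, f.commutes]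
  rw [f.map_det]
  congr 1
  ext i j
  by_cases h : i = j <;>
    simp [h, Matrix.one_apply, hC]

lemma aux_pdet_map {K : Type*} [CommRing K] (g : ℝ[X] →+* K) {γ : Type*} [Fintype γ]
    [DecidableEq γ] (M : Matrix γ γ ℝ) :
    g (pdet X M) = det ((g X) • (1 : Matrix γ γ K) + M.map (g.comp (Polynomial.C : ℝ →+* ℝ[X]))) := by
  unfold pdet
  rw [g.map_det]
  congr 1
  ext i j
  by_cases hij : i = j <;> simp [hij, Matrix.one_apply]

lemma aux_split {K : Type*} [Field K] {x : K} (hx : x ≠ 0) {γ : Type*} [Fintype γ]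
    [DecidableEq γ] (M : Matrix γ γ K) :
    det (x • (1 : Matrix γ γ K) + M) = x ^ Fintype.card γ * det (1 + x⁻¹ • M) := by
  rw [← Matrix.det_smul]
  congr 1
  rw [smul_add, smul_smul, mul_inv_cancel₀ hx, one_smul]

lemma pdet_key {α β : Type*} [Fintype α] [Fintype β] [DecidableEq α] [DecidableEq β]
    (A : Matrix α β ℝ) (B : Matrix β α ℝ) :
    X ^ (Fintype.card β) * pdet X (A * B) = X ^ (Fintype.card α) * pdet X (B * A) := by
  set K := FractionRing ℝ[X]
  have hinj : Function.Injective (algebraMap ℝ[X] K) := IsFractionRing.injective _ _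
  apply hinj
  set g : ℝ[X] →+* K := algebraMap ℝ[X] K with hg
  have hx : g X ≠ 0 := by
    simp only [hg, ne_eq, map_eq_zero_iff _ hinj]
    exact (map_ne_zero_iff _ hinj).mpr (Polynomial.X_ne_zero (R := ℝ))
  set h : ℝ →+* K := g.comp (Polynomial.C : ℝ →+* ℝ[X]) with hh
  rw [g.map_mul, g.map_mul, map_pow, map_pow, aux_pdet_map g (A * B), aux_pdet_map g (B * A),
    ← hh, Matrix.map_mul, Matrix.map_mul, aux_split hx, aux_split hx]
  have hcomm : (1 : Matrix α α K) + (g X)⁻¹ • (A.map h * B.map h) =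
      1 + A.map h * ((g X)⁻¹ • B.map h) := by rw [Matrix.mul_smul]
  have hcomm2 : (1 : Matrix β β K) + (g X)⁻¹ • (B.map h * A.map h) =
      1 + ((g X)⁻¹ • B.map h) * A.map h := by rw [Matrix.smul_mul]
  rw [hcomm, hcomm2, Matrix.det_one_add_mul_comm]
  ring

lemma pdet_sub_smul {α : Type*} [Fintype α] [DecidableEq α] (p : ℝ[X]) (c : ℝ)
    (M : Matrix α α ℝ) : pdet p (M - c • 1) = pdet (p - C c) M := by
  unfold pdet
  congr 1
  ext i j
  by_cases h : i = j <;>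
    simp [h, Matrix.one_apply, map_sub] <;> ring


theorem stmt_15 {V : Type*} [Fintype V] [DecidableEq V] (G : SimpleGraph V)
    (d n m : ℕ) (hd : 3 ≤ d) (hreg : G.IsRegularOfDegree d) (hconn : G.Connected)
    (hn : Fintype.card V = n) (hm : G.edgeFinset.card = m)
    (lam : Fin n → ℝ)
    (hchar : (G.adjMatrix ℝ).charpoly = ∏ i, (X - C (lam i)))
    (ψ : OLV G → G.edgeSet)
    (hψ : ∀ a : OLV G, (ψ a : Sym2 V) = s(a.1.1, a.1.2))
    (ε : OLV G → Bool)
    (hε : ∀ a b : OLV G, ψ a = ψ b → a ≠ b → ε a ≠ ε b)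
    (sgn : G.edgeSet → G.edgeSet → ℤ)
    (hsgn : ∀ a b : OLV G, (Lstar G).Adj a b →
      sgn (ψ a) (ψ b) = if ε a = ε b then 1 else -1) :
    (Matrix.of fun e f : G.edgeSet =>
        if (G.lineGraph).Adj e f then (sgn e f : ℝ) else 0).charpoly =
      (X - 2) ^ (m - n) * ∏ i, (X - C (lam i) + C ((d : ℝ) - 2)) := by
  have hB := Bmat_eq G ψ hψ ε hε sgn hsgn
  have hNNT := Nmat_NNT G ψ hψ ε hε d hreg
  have hcardE : Fintype.card ↥G.edgeSet = m := by
    rw [← hm, SimpleGraph.edgeFinset_card]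
  have h2m : n * d = 2 * m := by
    rw [← hn, ← hm, ← SimpleGraph.sum_degrees_eq_twice_card_edges]
    simp only [hreg _, Finset.sum_const, Finset.card_univ, smul_eq_mul]
  have hmn : n ≤ m := by
    have h3 : n * 3 ≤ n * d := Nat.mul_le_mul_left n hd
    omega
  set P := pdet X ((Nmat G ε)ᵀ * Nmat G ε) with hPdef
  set Q := pdet X (Nmat G ε * (Nmat G ε)ᵀ) with hQdef
  have hQ : Q = ∏ i, (X - C (lam i) + C (d : ℝ)) := by
    rw [hQdef, hNNT]
    have heq : (d : ℝ) • (1 : Matrix V V ℝ) - G.adjMatrix ℝ =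
        (-(G.adjMatrix ℝ)) - (-(d : ℝ)) • 1 := by
      rw [neg_smul, sub_neg_eq_add]
      abel
    rw [heq, pdet_sub_smul]
    have hstep : pdet (X - C (-(d : ℝ))) (-(G.adjMatrix ℝ)) =
        (Polynomial.aeval (X - C (-(d : ℝ))) : ℝ[X] →ₐ[ℝ] ℝ[X])
          (pdet X (-(G.adjMatrix ℝ))) := by
      rw [pdet_aeval, Polynomial.aeval_X]
    rw [hstep, ← charpoly_eq_pdet, hchar, map_prod]
    refine Finset.prod_congr rfl fun i _ => ?_
    simp only [map_sub, Polynomial.aeval_X, Polynomial.aeval_C, Polynomial.algebraMap_eq,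
      map_neg]
    ring
  have hkey := pdet_key ((Nmat G ε)ᵀ) (Nmat G ε)
  rw [hn, hcardE, ← hPdef, ← hQdef] at hkey
  have hP : P = X ^ (m - n) * Q := by
    apply mul_left_cancel₀ (pow_ne_zero n (X_ne_zero : (X : ℝ[X]) ≠ 0))
    rw [hkey, ← mul_assoc, ← pow_add]
    congr 2
    omega
  rw [hB, charpoly_eq_pdet, neg_sub, pdet_sub_smul]
  have hstep2 : pdet (X - C (2 : ℝ)) ((Nmat G ε)ᵀ * Nmat G ε) =
      (Polynomial.aeval (X - C (2 : ℝ)) : ℝ[X] →ₐ[ℝ] ℝ[X]) P := by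
    rw [hPdef, pdet_aeval, Polynomial.aeval_X]
  rw [hstep2, hP, hQ, _root_.map_mul, map_pow, map_prod]
  have hC2 : Polynomial.C (2 : ℝ) = (2 : ℝ[X]) := map_ofNat C 2
  congr 1
  · rw [show (Polynomial.aeval (X - C (2:ℝ))) (X : ℝ[X]) = X - C 2 from Polynomial.aeval_X _, hC2]
  · refine Finset.prod_congr rfl fun i _ => ?_
    simp only [map_sub, map_add, Polynomial.aeval_X, Polynomial.aeval_C,
      Polynomial.algebraMap_eq, Polynomial.C_sub]
    ring
end
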